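/- Let k ≥ 5 be an integer and let T_0,…,T_q be a one-phase k-bulk tree sequence. Then q ≤ ⌈log₂|T_0| / (k−2)⌉. -/

import Mathlib

attribute [local instance] Classical.propDecidable

/-- A binary tree with real-number node values. -/
inductive BT : Type
  | leaf : BT
  | node : BT → ℝ → BT → BT

namespace BT

/-- The set of values stored in the tree. -/
noncomputable def nodes : BT → Finset ℝ
  | .leaf => ∅
  | .node l v r => insert v (nodes l ∪ nodes r)

/-- The signature of `x` in the tree: the bit string of the search path for `x`
(`false` = step to a left child, `true` = step to a right child). For a node `x` of the
tree, its length is the depth `d_T(x)`. -/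
noncomputable def sig : BT → ℝ → List Bool
  | .leaf, _ => []
  | .node l v r, x =>
    if x < v then false :: sig l x
    else if v < x then true :: sig r x
    else []

/-- The number of nodes of the tree. -/
def size : BT → ℕ
  | .leaf => 0
  | .node l _ r => size l + size r + 1

/-- The binary-search-tree property: all values in a left subtree are smaller than the
value at the node, all values in a right subtree are larger. -/
def isBST : BT → Prop
  | .leaf => True
  | .node l v r => (∀ x ∈ nodes l, x < v) ∧ (∀ x ∈ nodes r, v < x) ∧ isBST l ∧ isBST r

/-- The height of the tree: the maximum depth of a node (0 for the empty tree). -/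
noncomputable def height (t : BT) : ℕ := (nodes t).sup fun x => (sig t x).length

/-- The subtree rooted at the node holding the value `x` (a leaf if `x` is absent). -/
noncomputable def subtreeAt : BT → ℝ → BT
  | .leaf, _ => .leaf
  | .node l v r, x =>
    if x < v then subtreeAt l x
    else if v < x then subtreeAt r x
    else .node l v r

end BT

/-- `Chunks a X Y` : the finite set `X` `a`-chunks the finite set `Y`, i.e. every
`(a+1)`-element subset `S ⊆ Y` admits an `x ∈ X` with `min S ≤ x ≤ max S`
(equivalently, `s₁ ≤ x ≤ s₂` for some `s₁, s₂ ∈ S`). -/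
def Chunks (a : ℕ) (X Y : Finset ℝ) : Prop :=
  ∀ S ⊆ Y, S.card = a + 1 → ∃ x ∈ X, (∃ s ∈ S, s ≤ x) ∧ ∃ s ∈ S, x ≤ s

namespace BT

/-- Standard binary search tree insertion: the new value is attached at the external
node ending its search path. -/
noncomputable def ins : BT → ℝ → BT
  | .leaf, x => .node .leaf x .leaf
  | .node l v r, x =>
    if x < v then .node (ins l x) v r
    else if v < x then .node l v (ins r x)
    else .node l v r

end BT

/-- `t'` is obtained from `t` by `BulkInsert(I)`: inserting the elements of the finite
set `I` one by one, in some order, by standard binary search tree insertion. -/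
def BulkInsertRel (t : BT) (I : Finset ℝ) (t' : BT) : Prop :=
  ∃ l : List ℝ, l.Nodup ∧ l.toFinset = I ∧ t' = l.foldl BT.ins t

namespace BT

/-- Delete the largest value of the tree (following the recursive deletion rule) and
return it together with the remaining tree. -/
noncomputable def extractMax : BT → Option (ℝ × BT)
  | .leaf => none
  | .node l v .leaf =>
    match extractMax l with
    | none => some (v, .leaf)
    | some (m, l') => some (v, .node l' m .leaf)
  | .node l v (.node rl rv rr) =>
    match extractMax (.node rl rv rr) with
    | none => some (v, l)
    | some (m, r') => some (m, .node l v r')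

/-- Delete the smallest value of the tree (following the recursive deletion rule) and
return it together with the remaining tree. -/
noncomputable def extractMin : BT → Option (ℝ × BT)
  | .leaf => none
  | .node .leaf v r =>
    match extractMin r with
    | none => some (v, .leaf)
    | some (m, r') => some (v, .node .leaf m r')
  | .node (.node ll lv lr) v r =>
    match extractMin (.node ll lv lr) with
    | none => some (v, r)
    | some (m, l') => some (m, .node l' v r)

/-- Recursive deletion of the value `x`: if the node holding `x` is a leaf, remove it;
otherwise, if it has a left child, recursively delete the largest value of its left
subtree and replace `x` with it; otherwise recursively delete the smallest value of its
right subtree and replace `x` with it. -/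
noncomputable def delete : BT → ℝ → BT
  | .leaf, _ => .leaf
  | .node l v r, x =>
    if x < v then .node (delete l x) v r
    else if v < x then .node l v (delete r x)
    else
      match extractMax l with
      | some (m, l') => .node l' m r
      | none =>
        match extractMin r with
        | some (m, r') => .node .leaf m r'
        | none => .leaf

end BT

/-- `t'` is obtained from `t` by `BulkDelete(D)`: deleting the elements of the finite
set `D` one by one, in some order. -/
def BulkDeleteRel (t : BT) (D : Finset ℝ) (t' : BT) : Prop :=
  ∃ l : List ℝ, l.Nodup ∧ l.toFinset = D ∧ t' = l.foldl BT.delete t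

namespace BT

/-- `Split(x)`: split a binary search tree along the search path of `x` into the two
binary search trees on `{z ∈ V(T) : z < x}` and `{z ∈ V(T) : z > x}`. -/
noncomputable def split : BT → ℝ → BT × BT
  | .leaf, _ => (.leaf, .leaf)
  | .node l v r, x =>
    if x < v then
      ((split l x).1, .node (split l x).2 v r)
    else if v < x then
      (.node l v (split r x).1, (split r x).2)
    else (l, r)

end BT

namespace BT

/-- In-order (sorted, for a binary search tree) list of the values in the tree. -/
def inorder : BT → List ℝ
  | .leaf => []
  | .node l v r => inorder l ++ v :: inorder r

/-- `MultiSplit`: split a tree at an increasing list of values by splitting at the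
median value and recursing on both sides; returns the ordered list of resulting trees. -/
noncomputable def multiSplit : BT → List ℝ → List BT
  | t, [] => [t]
  | t, x₀ :: xs' =>
    multiSplit (split t ((x₀ :: xs').getD (((x₀ :: xs').length + 1) / 2 - 1) 0)).1
        ((x₀ :: xs').take (((x₀ :: xs').length + 1) / 2 - 1)) ++
    multiSplit (split t ((x₀ :: xs').getD (((x₀ :: xs').length + 1) / 2 - 1) 0)).2
        ((x₀ :: xs').drop (((x₀ :: xs').length + 1) / 2))
termination_by _ xs => xs.length
decreasing_by
  · simp [List.length_take]; omega
  · simp [List.length_drop]; omega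

/-- Replace the external (leaf) positions of a tree, from left to right, by the trees of
the given list (this is the order consistent with the binary search tree property);
also returns the unused trees of the list. -/
def glue : BT → List BT → BT × List BT
  | .leaf, ts => (ts.headD .leaf, ts.tail)
  | .node l v r, ts =>
    ((.node (glue l ts).1 v (glue r (glue l ts).2).1), (glue r (glue l ts).2).2)

/-- The ordered list of subtrees hanging below depth `k`: one (possibly empty) tree for
each gap between consecutive nodes of depth `< k`; these are the trees of the forest
`T − Z` where `Z` is the set of nodes of depth `< k`. -/
def slots : ℕ → BT → List BT
  | 0, t => [t]
  | _ + 1, .leaf => [.leaf]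
  | k + 1, .node l _ r => slots k l ++ slots k r

/-- The set `Z` of nodes of the tree of depth less than `k`. -/
noncomputable def shallowNodes (t : BT) (k : ℕ) : Finset ℝ :=
  (nodes t).filter fun x => (sig t x).length < k

/-- The list `X = x_1, …, x_{2^k − 1}` where `x_j` is the element of rank
`⌊j·|t| / 2^k⌋` in the sorted order of the values of `t`. -/
noncomputable def rankElems (t : BT) (k : ℕ) : List ℝ :=
  (List.range (2 ^ k - 1)).map fun j => (inorder t).getD ((j + 1) * size t / 2 ^ k) 0

/-- The ordered list of trees obtained by applying `MultiSplit` to each tree of the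
forest `t − Z`, each with the increasing list of the elements of `X` it contains. -/
noncomputable def balParts (t : BT) (k : ℕ) : List BT :=
  (slots k t).flatMap fun ti =>
    multiSplit ti ((inorder ti).filter fun x => x ∈ rankElems t k)

/-- `t` is a perfectly balanced binary search tree on the finite set `s`: its height
equals `⌊log₂ |t|⌋`. -/
def IsPerfBalBST (s : Finset ℝ) (t : BT) : Prop :=
  isBST t ∧ nodes t = s ∧ height t = Nat.log 2 (size t)

/-- `IsBalanceResult k tx s'` : `s'` is a possible result of applying `Balance(·, k)` to
the (sub)tree `tx`: if `|tx| < 2^k`, `s'` is a perfectly balanced binary search tree on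
the values of `tx`; otherwise `s'` is obtained by attaching, at the external positions
of a perfectly balanced binary search tree on `Z ∪ X`, the trees obtained by the
`MultiSplit`s of the trees of the forest `tx − Z`. -/
def IsBalanceResult (k : ℕ) (tx : BT) (s' : BT) : Prop :=
  if size tx < 2 ^ k then IsPerfBalBST (nodes tx) s'
  else
    ∃ t0 : BT,
      IsPerfBalBST (shallowNodes tx k ∪ (rankElems tx k).toFinset) t0 ∧
      s' = (glue t0 (balParts tx k)).1

/-- Replace the subtree rooted at the node holding `x` by `s`. -/
noncomputable def replaceAt : BT → ℝ → BT → BT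
  | .leaf, _, _ => .leaf
  | .node l v r, x, s =>
    if x < v then .node (replaceAt l x s) v r
    else if v < x then .node l v (replaceAt r x s)
    else s

/-- `BalanceRel t x k t'` : `t'` is a possible result of applying `Balance(x, k)` to `t`,
i.e. of replacing the subtree of `t` rooted at `x` by a result of `Balance(·, k)`. -/
def BalanceRel (t : BT) (x : ℝ) (k : ℕ) (t' : BT) : Prop :=
  ∃ s' : BT, IsBalanceResult k (subtreeAt t x) s' ∧ t' = replaceAt t x s'

/-- `BulkBalanceRel k θ t t'` : `t'` is a possible result of applying `BulkBalance(θ, k)`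
to `t`, i.e. of applying `Balance(x, k)` to every node `x` of depth `θ` in `t` (a no-op
if there is no such node). -/
def BulkBalanceRel (k : ℕ) : ℕ → BT → BT → Prop
  | 0, t, t' => (t = .leaf ∧ t' = .leaf) ∨ IsBalanceResult k t t'
  | _ + 1, .leaf, t' => t' = .leaf
  | θ + 1, .node l v r, t' =>
      ∃ l' r' : BT, BulkBalanceRel k θ l l' ∧ BulkBalanceRel k θ r r' ∧ t' = .node l' v r'

end BT

/-- `T 0, …, T q` is a one-phase `k`-bulk tree sequence: the node sets form a
1-chunking sequence of non-empty finite sets, and for each `y < q` one has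
`h(T_y) > y·(k+1)` and `T (y+1)` is obtained from `T y` by applying
`BulkBalance(y·(k+1), k)`, then `BulkInsert` of the new values, then `BulkDelete` of
the removed values. -/
def OnePhaseSeq (k q : ℕ) (T : ℕ → BT) : Prop :=
  (∀ y ≤ q, (T y).isBST) ∧
  (∀ y ≤ q, (T y).nodes.Nonempty) ∧
  (∀ y < q, Chunks 1 (T y).nodes (T (y + 1)).nodes ∧ Chunks 1 (T (y + 1)).nodes (T y).nodes) ∧
  (∀ y < q, (T y).height > y * (k + 1) ∧
    ∃ t₁ t₂ : BT,
      BT.BulkBalanceRel k (y * (k + 1)) (T y) t₁ ∧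
      BulkInsertRel t₁ ((T (y + 1)).nodes \ (T y).nodes) t₂ ∧
      BulkDeleteRel t₂ ((T y).nodes \ (T (y + 1)).nodes) (T (y + 1)))
namespace BT

/-! ### Basic lemmas -/

lemma size_node (l : BT) (v : ℝ) (r : BT) : size (node l v r) = size l + size r + 1 := rfl

lemma nodes_node (l : BT) (v : ℝ) (r : BT) :
    nodes (node l v r) = insert v (nodes l ∪ nodes r) := rfl

lemma inorder_node (l : BT) (v : ℝ) (r : BT) :
    inorder (node l v r) = inorder l ++ v :: inorder r := rfl

lemma isBST_node {l : BT} {v : ℝ} {r : BT} :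
    isBST (node l v r) ↔
      (∀ x ∈ nodes l, x < v) ∧ (∀ x ∈ nodes r, v < x) ∧ isBST l ∧ isBST r := Iff.rfl

lemma mem_inorder_iff (t : BT) (x : ℝ) : x ∈ inorder t ↔ x ∈ nodes t := by
  induction t with
  | leaf => simp [inorder, nodes]
  | node l v r ihl ihr => simp [inorder, nodes, ihl, ihr]; tauto

lemma inorder_toFinset (t : BT) : (inorder t).toFinset = nodes t := by
  ext x; simp [List.mem_toFinset, mem_inorder_iff]

lemma inorder_length (t : BT) : (inorder t).length = size t := by
  induction t with
  | leaf => rfl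
  | node l v r ihl ihr => simp [inorder, size, ihl, ihr]; try omega

lemma card_nodes_le_size (t : BT) : (nodes t).card ≤ size t := by
  induction t with
  | leaf => simp [nodes, size]
  | node l v r ihl ihr =>
    calc (nodes (node l v r)).card ≤ (nodes l ∪ nodes r).card + 1 :=
          Finset.card_insert_le _ _
    _ ≤ ((nodes l).card + (nodes r).card) + 1 := by
        exact Nat.add_le_add_right (Finset.card_union_le _ _) 1
    _ ≤ size (node l v r) := by simp [size]; omega

lemma inorder_pairwise {t : BT} (h : isBST t) : (inorder t).Pairwise (· < ·) := by
  induction t with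
  | leaf => simp [inorder]
  | node l v r ihl ihr =>
    obtain ⟨hl, hr, bl, br⟩ := h
    rw [inorder_node, List.pairwise_append]
    refine ⟨ihl bl, ?_, ?_⟩
    · rw [List.pairwise_cons]
      exact ⟨fun y hy => hr y ((mem_inorder_iff r y).1 hy), ihr br⟩
    · intro x hx y hy
      have hxv : x < v := hl x ((mem_inorder_iff l x).1 hx)
      rcases List.mem_cons.1 hy with h | h
      · exact h ▸ hxv
      · exact hxv.trans (hr y ((mem_inorder_iff r y).1 h))

lemma isBST_of_pairwise {t : BT} (h : (inorder t).Pairwise (· < ·)) : isBST t := by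
  induction t with
  | leaf => trivial
  | node l v r ihl ihr =>
    rw [inorder_node, List.pairwise_append] at h
    obtain ⟨h1, h2, h3⟩ := h
    rw [List.pairwise_cons] at h2
    refine ⟨?_, ?_, ihl h1, ihr h2.2⟩
    · intro x hx
      exact h3 x ((mem_inorder_iff l x).2 hx) v (List.mem_cons_self)
    · intro x hx
      exact h2.1 x ((mem_inorder_iff r x).2 hx)

lemma inorder_nodup {t : BT} (h : isBST t) : (inorder t).Nodup :=
  (inorder_pairwise h).imp ne_of_lt

lemma size_eq_card {t : BT} (h : isBST t) : size t = (nodes t).card := by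
  rw [← inorder_toFinset, List.toFinset_card_of_nodup (inorder_nodup h), inorder_length]

lemma size_pos_of_nonempty {t : BT} (h : (nodes t).Nonempty) : 1 ≤ size t := by
  cases t with
  | leaf => simp [nodes] at h
  | node l v r => simp [size]

/-! ### ins -/

lemma nodes_ins (t : BT) (x : ℝ) : nodes (ins t x) = insert x (nodes t) := by
  induction t with
  | leaf => simp [ins, nodes]
  | node l v r ihl ihr =>
    rcases lt_trichotomy x v with h1 | h1 | h1
    · rw [ins]; simp only [if_pos h1]
      rw [nodes_node, nodes_node, ihl]
      ext z; simp [Finset.mem_insert]; tauto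
    · subst h1
      rw [ins]; simp only [lt_irrefl, if_false]
      rw [nodes_node]; simp [Finset.insert_idem]
    · rw [ins]; simp only [if_neg (not_lt.2 h1.le), if_pos h1]
      rw [nodes_node, nodes_node, ihr]
      ext z; simp [Finset.mem_insert]; tauto

lemma isBST_ins {t : BT} (x : ℝ) (h : isBST t) : isBST (ins t x) := by
  induction t with
  | leaf => exact ⟨by simp [nodes], by simp [nodes], trivial, trivial⟩
  | node l v r ihl ihr =>
    obtain ⟨hl, hr, bl, br⟩ := h
    rcases lt_trichotomy x v with h1 | h1 | h1
    · rw [ins]; simp only [if_pos h1]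
      refine ⟨?_, hr, ihl bl, br⟩
      intro z hz; rw [nodes_ins] at hz
      rcases Finset.mem_insert.1 hz with h | h
      · exact h ▸ h1
      · exact hl z h
    · subst h1; rw [ins]; simp only [lt_irrefl, if_false]
      exact ⟨hl, hr, bl, br⟩
    · rw [ins]; simp only [if_neg (not_lt.2 h1.le), if_pos h1]
      refine ⟨hl, ?_, bl, ihr br⟩
      intro z hz; rw [nodes_ins] at hz
      rcases Finset.mem_insert.1 hz with h | h
      · exact h ▸ h1
      · exact hr z h

lemma sig_ins {t : BT} (x v : ℝ) (h : isBST t) (hv : v ∈ nodes t) :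
    sig (ins t x) v = sig t v := by
  induction t with
  | leaf => simp [nodes] at hv
  | node l v0 r ihl ihr =>
    obtain ⟨hl, hr, bl, br⟩ := h
    rcases lt_trichotomy x v0 with h1 | h1 | h1
    · rw [ins]; simp only [if_pos h1]
      rcases lt_trichotomy v v0 with h2 | h2 | h2
      · rw [sig, sig, if_pos h2, if_pos h2]
        have hvl : v ∈ nodes l := by
          rcases Finset.mem_insert.1 hv with h | h
          · exact absurd h (ne_of_lt h2)
          · rcases Finset.mem_union.1 h with h | h
            · exact h
            · exact absurd (hr v h) (not_lt.2 h2.le)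
        rw [ihl bl hvl]
      · subst h2; rw [sig, sig]; simp
      · simp [sig, h2, not_lt.2 h2.le]
    · subst h1; rw [ins]; simp
    · rw [ins]; simp only [if_neg (not_lt.2 h1.le), if_pos h1]
      rcases lt_trichotomy v v0 with h2 | h2 | h2
      · rw [sig, sig, if_pos h2, if_pos h2]
      · subst h2; rw [sig, sig]; simp
      · have hvr : v ∈ nodes r := by
          rcases Finset.mem_insert.1 hv with h | h
          · exact absurd h (ne_of_gt h2)
          · rcases Finset.mem_union.1 h with h | h
            · exact absurd (hl v h) (not_lt.2 h2.le)
            · exact h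
        simp [sig, h2, not_lt.2 h2.le, ihr br hvr]

end BT
namespace BT

/-! ### slots, go, msz -/

/-- Follow a path in the tree. -/
def go : BT → List Bool → BT
  | t, [] => t
  | .leaf, _ :: _ => .leaf
  | .node l _ r, b :: σ => if b then go r σ else go l σ

/-- Maximum size of a subtree at depth `d`. -/
def msz (d : ℕ) (t : BT) : ℕ := ((slots d t).map size).foldr max 0

lemma slots_zero (t : BT) : slots 0 t = [t] := rfl

lemma slots_succ_leaf (d : ℕ) : slots (d+1) leaf = [leaf] := rfl

lemma slots_succ_node (d : ℕ) (l : BT) (v : ℝ) (r : BT) :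
    slots (d+1) (node l v r) = slots d l ++ slots d r := rfl

lemma go_nil (t : BT) : go t [] = t := by cases t <;> rfl

lemma go_leaf (σ : List Bool) : go leaf σ = leaf := by cases σ <;> rfl

lemma go_node_cons (l : BT) (v : ℝ) (r : BT) (b : Bool) (σ : List Bool) :
    go (node l v r) (b :: σ) = if b then go r σ else go l σ := rfl

lemma slots_ne_nil (d : ℕ) (t : BT) : slots d t ≠ [] := by
  induction d generalizing t with
  | zero => simp [slots]
  | succ d ih =>
    cases t with
    | leaf => simp [slots]
    | node l v r =>
      rw [slots_succ_node]; intro h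
      exact ih l (List.append_eq_nil_iff.1 h).1

lemma foldr_max_le {l : List ℕ} {c : ℕ} (h : ∀ x ∈ l, x ≤ c) : l.foldr max 0 ≤ c := by
  induction l with
  | nil => simp
  | cons a l ih => simp only [List.foldr_cons, max_le_iff]
                   exact ⟨h a (List.mem_cons_self), ih fun x hx => h x (List.mem_cons_of_mem _ hx)⟩

lemma le_foldr_max {l : List ℕ} {x : ℕ} (h : x ∈ l) : x ≤ l.foldr max 0 := by
  induction l with
  | nil => simp at h
  | cons a l ih =>
    rcases List.mem_cons.1 h with h | h
    · subst h; simp only [List.foldr_cons]; exact le_max_left _ _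
    · simp only [List.foldr_cons]; exact le_max_of_le_right (ih h)

lemma foldr_max_init (l : List ℕ) (b : ℕ) : l.foldr max b = max (l.foldr max 0) b := by
  induction l with
  | nil => simp
  | cons a l ih => simp [List.foldr_cons, ih, max_assoc]

lemma foldr_max_append (l1 l2 : List ℕ) :
    (l1 ++ l2).foldr max 0 = max (l1.foldr max 0) (l2.foldr max 0) := by
  induction l1 with
  | nil => simp
  | cons a l ih => simp [List.foldr_cons, ih, max_assoc]

lemma msz_zero (t : BT) : msz 0 t = size t := by simp [msz, slots]

lemma msz_succ_node (d : ℕ) (l : BT) (v : ℝ) (r : BT) :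
    msz (d+1) (node l v r) = max (msz d l) (msz d r) := by
  simp only [msz]; rw [slots_succ_node, List.map_append, foldr_max_append]

lemma msz_leaf (d : ℕ) : msz d leaf = 0 := by
  cases d <;> simp [msz, slots, size]

lemma size_le_msz {d : ℕ} {t s : BT} (h : s ∈ slots d t) : size s ≤ msz d t :=
  le_foldr_max (List.mem_map_of_mem (f := size) h)

lemma msz_le {d : ℕ} {t : BT} {c : ℕ} (h : ∀ s ∈ slots d t, size s ≤ c) : msz d t ≤ c := by
  apply foldr_max_le; intro x hx
  rcases List.mem_map.1 hx with ⟨s, hs, rfl⟩; exact h s hs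

lemma go_mem_slots (t : BT) (σ : List Bool) : go t σ ∈ slots σ.length t := by
  induction σ generalizing t with
  | nil => simp [go_nil, slots]
  | cons b σ ih =>
    cases t with
    | leaf => cases b <;> simp [go_leaf, slots]
    | node l v r =>
      rw [List.length_cons, slots_succ_node]
      cases b <;> simp only [go_node_cons, if_true, if_false, Bool.false_eq_true]
      · exact List.mem_append_left _ (ih l)
      · exact List.mem_append_right _ (ih r)

lemma slots_eq_go {d : ℕ} {t s : BT} (h : s ∈ slots d t) :
    ∃ σ : List Bool, σ.length = d ∧ s = go t σ := by
  induction d generalizing t with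
  | zero => rw [slots_zero] at h; simp at h; exact ⟨[], rfl, by rw [go_nil, h]⟩
  | succ d ih =>
    cases t with
    | leaf =>
      rw [slots_succ_leaf] at h; simp at h
      exact ⟨List.replicate (d+1) false, by simp, by rw [go_leaf, h]⟩
    | node l v r =>
      rw [slots_succ_node] at h
      rcases List.mem_append.1 h with h | h
      · obtain ⟨σ, hlen, rfl⟩ := ih h
        exact ⟨false :: σ, by simp [hlen], by simp [go_node_cons]⟩
      · obtain ⟨σ, hlen, rfl⟩ := ih h
        exact ⟨true :: σ, by simp [hlen], by simp [go_node_cons]⟩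

lemma slots_isBST {d : ℕ} {t s : BT} (ht : isBST t) (h : s ∈ slots d t) : isBST s := by
  induction d generalizing t with
  | zero => rw [slots_zero] at h; simp at h; exact h ▸ ht
  | succ d ih =>
    cases t with
    | leaf => rw [slots_succ_leaf] at h; simp at h; exact h ▸ trivial
    | node l v r =>
      rw [slots_succ_node] at h
      rcases List.mem_append.1 h with h | h
      · exact ih ht.2.2.1 h
      · exact ih ht.2.2.2 h

lemma slots_size_le {d : ℕ} {t s : BT} (h : s ∈ slots d t) : size s ≤ size t := by
  induction d generalizing t with
  | zero => rw [slots_zero] at h; simp at h; exact h ▸ le_refl _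
  | succ d ih =>
    cases t with
    | leaf => rw [slots_succ_leaf] at h; simp at h; subst h; exact le_refl _
    | node l v r =>
      rw [slots_succ_node] at h
      rcases List.mem_append.1 h with h | h
      · exact (ih h).trans (by simp [size]; omega)
      · exact (ih h).trans (by simp [size]; omega)

lemma slots_nodes_subset {d : ℕ} {t s : BT} (h : s ∈ slots d t) : nodes s ⊆ nodes t := by
  induction d generalizing t with
  | zero => rw [slots_zero] at h; simp at h; exact h ▸ Finset.Subset.refl _
  | succ d ih =>
    cases t with
    | leaf => rw [slots_succ_leaf] at h; simp at h; subst h; exact Finset.Subset.refl _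
    | node l v r =>
      rw [slots_succ_node] at h
      rcases List.mem_append.1 h with h | h
      · exact (ih h).trans (by rw [nodes_node]; intro z hz; simp [Finset.mem_insert]; tauto)
      · exact (ih h).trans (by rw [nodes_node]; intro z hz; simp [Finset.mem_insert]; tauto)

lemma slots_sig {d : ℕ} {t s : BT} (ht : isBST t) (h : s ∈ slots d t) {v : ℝ}
    (hv : v ∈ nodes s) : v ∈ nodes t ∧ d ≤ (sig t v).length := by
  induction d generalizing t with
  | zero => rw [slots_zero] at h; simp at h; subst h; exact ⟨hv, Nat.zero_le _⟩
  | succ d ih =>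
    cases t with
    | leaf => rw [slots_succ_leaf] at h; simp at h; subst h; simp [nodes] at hv
    | node l v0 r =>
      obtain ⟨hl, hr, bl, br⟩ := ht
      rw [slots_succ_node] at h
      rcases List.mem_append.1 h with h | h
      · obtain ⟨hmem, hlen⟩ := ih bl h
        have hvv0 : v < v0 := hl v hmem
        refine ⟨by rw [nodes_node]; simp [hmem], ?_⟩
        rw [sig, if_pos hvv0]; simpa using hlen
      · obtain ⟨hmem, hlen⟩ := ih br h
        have hvv0 : v0 < v := hr v hmem
        refine ⟨by rw [nodes_node]; simp [hmem], ?_⟩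
        rw [sig, if_neg (not_lt.2 hvv0.le), if_pos hvv0]; simpa using hlen

lemma slots_cover {t : BT} (ht : isBST t) {v : ℝ} (hv : v ∈ nodes t) (k : ℕ)
    (hd : k ≤ (sig t v).length) :
    ∃ s ∈ slots k t, v ∈ nodes s ∧ (sig t v).length ≤ k + (sig s v).length := by
  induction k generalizing t with
  | zero => exact ⟨t, by simp [slots_zero], hv, by omega⟩
  | succ k ih =>
    cases t with
    | leaf => simp [nodes] at hv
    | node l v0 r =>
      obtain ⟨hl, hr, bl, br⟩ := ht
      rcases lt_trichotomy v v0 with h2 | h2 | h2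
      · have hvl : v ∈ nodes l := by
          rcases Finset.mem_insert.1 hv with h | h
          · exact absurd h (ne_of_lt h2)
          · rcases Finset.mem_union.1 h with h | h
            · exact h
            · exact absurd (hr v h) (not_lt.2 h2.le)
        rw [sig, if_pos h2] at hd ⊢
        obtain ⟨s, hs, hvs, hrest⟩ := ih bl hvl (by simp at hd; omega)
        refine ⟨s, by rw [slots_succ_node]; exact List.mem_append_left _ hs, hvs, ?_⟩
        simp; omega
      · subst h2; rw [sig] at hd; simp at hd
      · have hvr : v ∈ nodes r := by
          rcases Finset.mem_insert.1 hv with h | h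
          · exact absurd h (ne_of_gt h2)
          · rcases Finset.mem_union.1 h with h | h
            · exact absurd (hl v h) (not_lt.2 h2.le)
            · exact h
        rw [sig, if_neg (not_lt.2 h2.le), if_pos h2] at hd ⊢
        obtain ⟨s, hs, hvs, hrest⟩ := ih br hvr (by simp at hd; omega)
        refine ⟨s, by rw [slots_succ_node]; exact List.mem_append_right _ hs, hvs, ?_⟩
        simp; omega

lemma msz_le_size (d : ℕ) (t : BT) : msz d t ≤ size t := by
  apply foldr_max_le; intro x hx
  rcases List.mem_map.1 hx with ⟨s, hs, rfl⟩
  exact slots_size_le hs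

lemma msz_succ_le (d : ℕ) (t : BT) : msz (d+1) t ≤ msz d t := by
  induction d generalizing t with
  | zero =>
    rw [msz_zero]
    exact msz_le_size 1 t
  | succ d ih =>
    cases t with
    | leaf => simp [msz_leaf]
    | node l v r =>
      rw [msz_succ_node, msz_succ_node]
      exact max_le_max (ih l) (ih r)

/-- If the height exceeds `d`, some depth-`d` subtree has at least two nodes. -/
lemma two_le_msz_of_height {t : BT} (ht : isBST t) {d : ℕ} (h : d < height t) :
    2 ≤ msz d t := by
  rw [height] at h
  rcases Finset.lt_sup_iff.1 h with ⟨x, hx, hlen⟩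
  -- find the depth-d subtree containing x
  obtain ⟨s, hs, hxs, hrest⟩ := slots_cover ht hx d hlen.le
  have hbst : isBST s := slots_isBST ht hs
  have hpos : 1 ≤ (sig s x).length := by omega
  have : 2 ≤ size s := by
    cases s with
    | leaf => simp [nodes] at hxs
    | node l v r =>
      obtain ⟨hl, hr, bl, br⟩ := hbst
      rcases lt_trichotomy x v with h2 | h2 | h2
      · have hxl : x ∈ nodes l := by
          rcases Finset.mem_insert.1 hxs with h | h
          · exact absurd h (ne_of_lt h2)
          · rcases Finset.mem_union.1 h with h | h
            · exact h
            · exact absurd (hr x h) (not_lt.2 h2.le)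
        have := size_pos_of_nonempty ⟨x, hxl⟩
        simp [size]; omega
      · subst h2; rw [sig] at hpos; simp at hpos
      · have hxr : x ∈ nodes r := by
          rcases Finset.mem_insert.1 hxs with h | h
          · exact absurd h (ne_of_gt h2)
          · rcases Finset.mem_union.1 h with h | h
            · exact absurd (hl x h) (not_lt.2 h2.le)
            · exact h
        have := size_pos_of_nonempty ⟨x, hxr⟩
        simp [size]; omega
  exact this.trans (size_le_msz hs)

end BT
namespace BT

/-! ### go and sig -/

lemma nodes_go {t : BT} (ht : isBST t) (σ : List Bool) :
    nodes (go t σ) = (nodes t).filter (fun v => σ <+: sig t v) := by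
  induction σ generalizing t with
  | nil =>
    rw [go_nil]; ext z; simp [List.nil_prefix]
  | cons b σ ih =>
    cases t with
    | leaf => rw [go_leaf]; simp [nodes]
    | node l v0 r =>
      obtain ⟨hl, hr, bl, br⟩ := ht
      have sig_v0 : sig (node l v0 r) v0 = [] := by rw [sig]; simp
      have sig_left : ∀ z ∈ nodes l, sig (node l v0 r) z = false :: sig l z := by
        intro z hz; rw [sig, if_pos (hl z hz)]
      have sig_right : ∀ z ∈ nodes r, sig (node l v0 r) z = true :: sig r z := by
        intro z hz; rw [sig, if_neg (not_lt.2 (hr z hz).le), if_pos (hr z hz)]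
      cases b with
      | false =>
        rw [go_node_cons]; simp only [Bool.false_eq_true, if_false]
        rw [ih bl]
        ext z
        simp only [Finset.mem_filter, nodes_node, Finset.mem_insert, Finset.mem_union]
        constructor
        · rintro ⟨hz, hp⟩
          exact ⟨Or.inr (Or.inl hz), by rw [sig_left z hz]; exact List.cons_prefix_cons.2 ⟨rfl, hp⟩⟩
        · rintro ⟨hz, hp⟩
          rcases hz with rfl | hz | hz
          · rw [sig_v0] at hp; simp [List.prefix_nil] at hp
          · exact ⟨hz, by rw [sig_left z hz] at hp; exact (List.cons_prefix_cons.1 hp).2⟩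
          · rw [sig_right z hz] at hp
            rcases List.cons_prefix_cons.1 hp with ⟨h, -⟩; simp at h
      | true =>
        rw [go_node_cons]; simp only [if_true]
        rw [ih br]
        ext z
        simp only [Finset.mem_filter, nodes_node, Finset.mem_insert, Finset.mem_union]
        constructor
        · rintro ⟨hz, hp⟩
          exact ⟨Or.inr (Or.inr hz), by rw [sig_right z hz]; exact List.cons_prefix_cons.2 ⟨rfl, hp⟩⟩
        · rintro ⟨hz, hp⟩
          rcases hz with rfl | hz | hz
          · rw [sig_v0] at hp; simp [List.prefix_nil] at hp
          · rw [sig_left z hz] at hp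
            rcases List.cons_prefix_cons.1 hp with ⟨h, -⟩; simp at h
          · exact ⟨hz, by rw [sig_right z hz] at hp; exact (List.cons_prefix_cons.1 hp).2⟩

lemma sig_between {t : BT} (ht : isBST t) {u w x : ℝ} (hu : u ∈ nodes t) (hw : w ∈ nodes t)
    (hx : x ∈ nodes t) (h1 : u < x) (h2 : x < w) :
    ∀ σ : List Bool, σ <+: sig t u → σ <+: sig t w → σ <+: sig t x := by
  intro σ
  induction σ generalizing t with
  | nil => intro _ _; exact List.nil_prefix
  | cons b σ ih =>
    intro pu pw
    cases t with
    | leaf => simp [nodes] at hu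
    | node l v0 r =>
      obtain ⟨hl, hr, bl, br⟩ := ht
      have memcase : ∀ z : ℝ, z ∈ nodes (node l v0 r) → z = v0 ∨ z ∈ nodes l ∨ z ∈ nodes r := by
        intro z hz
        rcases Finset.mem_insert.1 hz with h | h
        · exact Or.inl h
        · rcases Finset.mem_union.1 h with h | h
          · exact Or.inr (Or.inl h)
          · exact Or.inr (Or.inr h)
      have sigu : sig (node l v0 r) u ≠ [] := fun h => by
        rw [h] at pu; simp [List.prefix_nil] at pu
      have sigw : sig (node l v0 r) w ≠ [] := fun h => by
        rw [h] at pw; simp [List.prefix_nil] at pw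
      have hul : u ≠ v0 := fun h => by subst h; rw [sig] at sigu; simp at sigu
      have hwl : w ≠ v0 := fun h => by subst h; rw [sig] at sigw; simp at sigw
      cases b with
      | false =>
        -- both u and w go left, so u < v0 and w < v0
        have hu0 : u < v0 := by
          by_contra hcon
          have : v0 < u := lt_of_le_of_ne (not_lt.1 hcon) (Ne.symm hul)
          rw [sig, if_neg (not_lt.2 this.le), if_pos this] at pu
          rcases List.cons_prefix_cons.1 pu with ⟨h, -⟩; simp at h
        have hw0 : w < v0 := by
          by_contra hcon
          have : v0 < w := lt_of_le_of_ne (not_lt.1 hcon) (Ne.symm hwl)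
          rw [sig, if_neg (not_lt.2 this.le), if_pos this] at pw
          rcases List.cons_prefix_cons.1 pw with ⟨h, -⟩; simp at h
        have hx0 : x < v0 := h2.trans hw0
        have hunl : u ∈ nodes l := by
          rcases memcase u hu with h | h | h
          · exact absurd h hul
          · exact h
          · exact absurd (hr u h) (not_lt.2 hu0.le)
        have hwnl : w ∈ nodes l := by
          rcases memcase w hw with h | h | h
          · exact absurd h hwl
          · exact h
          · exact absurd (hr w h) (not_lt.2 hw0.le)
        have hxnl : x ∈ nodes l := by
          rcases memcase x hx with h | h | h
          · exact absurd h (ne_of_lt hx0)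
          · exact h
          · exact absurd (hr x h) (not_lt.2 hx0.le)
        rw [sig, if_pos hu0] at pu
        rw [sig, if_pos hw0] at pw
        rw [sig, if_pos hx0]
        exact List.cons_prefix_cons.2 ⟨rfl,
          ih bl hunl hwnl hxnl (List.cons_prefix_cons.1 pu).2 (List.cons_prefix_cons.1 pw).2⟩
      | true =>
        have hu0 : v0 < u := by
          by_contra hcon
          have : u < v0 := lt_of_le_of_ne (not_lt.1 hcon) hul
          rw [sig, if_pos this] at pu
          rcases List.cons_prefix_cons.1 pu with ⟨h, -⟩; simp at h
        have hw0 : v0 < w := by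
          by_contra hcon
          have : w < v0 := lt_of_le_of_ne (not_lt.1 hcon) hwl
          rw [sig, if_pos this] at pw
          rcases List.cons_prefix_cons.1 pw with ⟨h, -⟩; simp at h
        have hx0 : v0 < x := hu0.trans h1
        have hunl : u ∈ nodes r := by
          rcases memcase u hu with h | h | h
          · exact absurd h hul
          · exact absurd (hl u h) (not_lt.2 hu0.le)
          · exact h
        have hwnl : w ∈ nodes r := by
          rcases memcase w hw with h | h | h
          · exact absurd h hwl
          · exact absurd (hl w h) (not_lt.2 hw0.le)
          · exact h
        have hxnl : x ∈ nodes r := by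
          rcases memcase x hx with h | h | h
          · exact absurd h (ne_of_gt hx0)
          · exact absurd (hl x h) (not_lt.2 hx0.le)
          · exact h
        rw [sig, if_neg (not_lt.2 hu0.le), if_pos hu0] at pu
        rw [sig, if_neg (not_lt.2 hw0.le), if_pos hw0] at pw
        rw [sig, if_neg (not_lt.2 hx0.le), if_pos hx0]
        exact List.cons_prefix_cons.2 ⟨rfl,
          ih br hunl hwnl hxnl (List.cons_prefix_cons.1 pu).2 (List.cons_prefix_cons.1 pw).2⟩

/-! ### separation counting -/

lemma card_le_of_separated (B : Finset ℝ) :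
    ∀ A : Finset ℝ, (∀ u ∈ B, ∀ w ∈ B, u < w → ∃ x ∈ A, u < x ∧ x < w) →
    B.card ≤ A.card + 1 := by
  induction B using Finset.strongInduction with
  | _ B ih =>
    intro A h
    by_cases hb : B.card ≤ 1
    · omega
    · have hBne : B.Nonempty := Finset.card_pos.1 (by omega)
      set u := B.min' hBne with hu
      have huB : u ∈ B := B.min'_mem hBne
      set B' := B.erase u with hB'
      have hssub : B' ⊂ B := Finset.erase_ssubset huB
      have hcard' : B'.card = B.card - 1 := Finset.card_erase_of_mem huB
      have hB'ne : B'.Nonempty := Finset.card_pos.1 (by omega)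
      set w := B'.min' hB'ne with hw
      have hwB' : w ∈ B' := B'.min'_mem hB'ne
      have hwB : w ∈ B := Finset.mem_of_mem_erase hwB'
      have huw : u < w :=
        lt_of_le_of_ne (B.min'_le w hwB) (Ne.symm (Finset.ne_of_mem_erase hwB'))
      obtain ⟨x, hxA, hux, hxw⟩ := h u huB w hwB huw
      have key : ∀ u' ∈ B', ∀ w' ∈ B', u' < w' →
          ∃ x' ∈ A.erase x, u' < x' ∧ x' < w' := by
        intro u' hu' w' hw' hlt
        obtain ⟨x', hx'A, h1, h2⟩ :=
          h u' (Finset.mem_of_mem_erase hu') w' (Finset.mem_of_mem_erase hw') hlt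
        have : x < x' := hxw.trans_le ((B'.min'_le u' hu').trans h1.le)
        exact ⟨x', Finset.mem_erase.2 ⟨ne_of_gt this, hx'A⟩, h1, h2⟩
      have := ih B' hssub (A.erase x) key
      have hAcard : (A.erase x).card = A.card - 1 := Finset.card_erase_of_mem hxA
      have hApos : 1 ≤ A.card := Finset.card_pos.2 ⟨x, hxA⟩
      omega

/-! ### BulkInsert bound -/

lemma foldl_ins_nodes (L : List ℝ) (t : BT) :
    nodes (L.foldl ins t) = nodes t ∪ L.toFinset := by
  induction L generalizing t with
  | nil => simp
  | cons a L ih =>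
    rw [List.foldl_cons, ih, nodes_ins]
    ext z; simp [Finset.mem_insert]

lemma foldl_ins_isBST (L : List ℝ) {t : BT} (ht : isBST t) : isBST (L.foldl ins t) := by
  induction L generalizing t with
  | nil => exact ht
  | cons a L ih => exact ih (isBST_ins a ht)

lemma foldl_ins_sig (L : List ℝ) {t : BT} (ht : isBST t) {v : ℝ} (hv : v ∈ nodes t) :
    sig (L.foldl ins t) v = sig t v := by
  induction L generalizing t with
  | nil => rfl
  | cons a L ih =>
    rw [List.foldl_cons, ih (isBST_ins a ht) (by rw [nodes_ins]; exact Finset.mem_insert_of_mem hv),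
      sig_ins a v ht hv]

lemma msz_foldl_ins (t : BT) (L : List ℝ) (ht : isBST t) (d : ℕ)
    (hsep : ∀ u ∈ L, ∀ w ∈ L, u < w → ∃ x ∈ nodes t, u < x ∧ x < w) :
    msz d (L.foldl ins t) ≤ 2 * msz d t + 1 := by
  set t2 := L.foldl ins t with ht2
  have bst2 : isBST t2 := foldl_ins_isBST L ht
  apply msz_le
  intro s hs
  obtain ⟨σ, hlen, rfl⟩ := slots_eq_go hs
  have hgo2 : isBST (go t2 σ) := slots_isBST bst2 (go_mem_slots t2 σ)
  rw [size_eq_card hgo2, nodes_go bst2]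
  set A := (nodes t).filter (fun v => σ <+: sig t v) with hA
  have hAgo : A = nodes (go t σ) := (nodes_go ht σ).symm
  have hAle : A.card ≤ msz d t := by
    rw [hAgo]
    calc (nodes (go t σ)).card ≤ size (go t σ) := card_nodes_le_size _
    _ ≤ msz d t := by rw [← hlen]; exact size_le_msz (go_mem_slots t σ)
  set S := (nodes t2).filter (fun v => σ <+: sig t2 v) with hS
  have hsub : S ⊆ A ∪ (S \ A) := by
    intro z hz
    by_cases h : z ∈ A
    · exact Finset.mem_union_left _ h
    · exact Finset.mem_union_right _ (Finset.mem_sdiff.2 ⟨hz, h⟩)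
  have hdiff : (S \ A).card ≤ A.card + 1 := by
    apply card_le_of_separated
    intro u' hu' w' hw' hlt
    have hu'S : u' ∈ S := (Finset.mem_sdiff.1 hu').1
    have hw'S : w' ∈ S := (Finset.mem_sdiff.1 hw').1
    have hu'nt : u' ∉ nodes t := by
      intro hcon
      apply (Finset.mem_sdiff.1 hu').2
      rw [hA, Finset.mem_filter]
      refine ⟨hcon, ?_⟩
      have := (Finset.mem_filter.1 hu'S).2
      rwa [foldl_ins_sig L ht hcon] at this
    have hw'nt : w' ∉ nodes t := by
      intro hcon
      apply (Finset.mem_sdiff.1 hw').2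
      rw [hA, Finset.mem_filter]
      refine ⟨hcon, ?_⟩
      have := (Finset.mem_filter.1 hw'S).2
      rwa [foldl_ins_sig L ht hcon] at this
    have hu'L : u' ∈ L := by
      have := (Finset.mem_filter.1 hu'S).1
      rw [ht2, foldl_ins_nodes] at this
      rcases Finset.mem_union.1 this with h | h
      · exact absurd h hu'nt
      · exact List.mem_toFinset.1 h
    have hw'L : w' ∈ L := by
      have := (Finset.mem_filter.1 hw'S).1
      rw [ht2, foldl_ins_nodes] at this
      rcases Finset.mem_union.1 this with h | h
      · exact absurd h hw'nt
      · exact List.mem_toFinset.1 h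
    obtain ⟨x, hxt, h1, h2⟩ := hsep u' hu'L w' hw'L hlt
    have hxt2 : x ∈ nodes t2 := by rw [ht2, foldl_ins_nodes]; exact Finset.mem_union_left _ hxt
    have hpx : σ <+: sig t2 x :=
      sig_between bst2 (Finset.mem_filter.1 hu'S).1 (Finset.mem_filter.1 hw'S).1 hxt2 h1 h2 σ
        (Finset.mem_filter.1 hu'S).2 (Finset.mem_filter.1 hw'S).2
    refine ⟨x, ?_, h1, h2⟩
    rw [hA, Finset.mem_filter]
    exact ⟨hxt, by rwa [foldl_ins_sig L ht hxt] at hpx⟩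
  calc S.card ≤ (A ∪ (S \ A)).card := Finset.card_le_card hsub
  _ ≤ A.card + (S \ A).card := Finset.card_union_le _ _
  _ ≤ A.card + (A.card + 1) := by omega
  _ ≤ 2 * msz d t + 1 := by omega

/-! ### BulkDelete bound -/

lemma extractMax_msz {t : BT} : ∀ {m : ℝ} {t' : BT}, extractMax t = some (m, t') →
    ∀ d, msz d t' ≤ msz d t := by
  induction t with
  | leaf => intro m t' h; simp [extractMax] at h
  | node l v r ihl ihr =>
    intro m t' h d
    cases r with
    | leaf =>
      cases h1 : extractMax l with
      | none =>
        rw [extractMax, h1] at h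
        simp at h
        rw [← h.2, msz_leaf]
        exact Nat.zero_le _
      | some p =>
        obtain ⟨m0, l'⟩ := p
        rw [extractMax, h1] at h
        simp at h
        rw [← h.2]
        cases d with
        | zero =>
          have := ihl h1 0
          simp only [msz_zero, size] at this ⊢
          omega
        | succ d =>
          rw [msz_succ_node, msz_succ_node]
          have := ihl h1 d
          exact max_le_max this (le_refl _)
    | node rl rv rr =>
      cases h1 : extractMax (node rl rv rr) with
      | none =>
        rw [extractMax, h1] at h
        simp at h
        rw [← h.2]
        cases d with
        | zero => simp only [msz_zero, size]; omega
        | succ d =>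
          rw [msz_succ_node]
          exact (msz_succ_le _ _).trans (le_max_left _ _)
      | some p =>
        obtain ⟨m0, r'⟩ := p
        rw [extractMax, h1] at h
        simp at h
        rw [← h.2]
        cases d with
        | zero =>
          have := ihr h1 0
          simp only [msz_zero, size] at this ⊢
          omega
        | succ d =>
          rw [msz_succ_node, msz_succ_node]
          exact max_le_max (le_refl _) (ihr h1 d)

lemma extractMin_msz {t : BT} : ∀ {m : ℝ} {t' : BT}, extractMin t = some (m, t') →
    ∀ d, msz d t' ≤ msz d t := by
  induction t with
  | leaf => intro m t' h; simp [extractMin] at h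
  | node l v r ihl ihr =>
    intro m t' h d
    cases l with
    | leaf =>
      cases h1 : extractMin r with
      | none =>
        rw [extractMin, h1] at h
        simp at h
        rw [← h.2, msz_leaf]
        exact Nat.zero_le _
      | some p =>
        obtain ⟨m0, r'⟩ := p
        rw [extractMin, h1] at h
        simp at h
        rw [← h.2]
        cases d with
        | zero =>
          have := ihr h1 0
          simp only [msz_zero, size] at this ⊢
          omega
        | succ d =>
          rw [msz_succ_node, msz_succ_node]
          have := ihr h1 d
          exact max_le_max (le_refl _) this
    | node ll lv lr =>
      cases h1 : extractMin (node ll lv lr) with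
      | none =>
        rw [extractMin, h1] at h
        simp at h
        rw [← h.2]
        cases d with
        | zero => simp only [msz_zero, size]; omega
        | succ d =>
          rw [msz_succ_node]
          exact (msz_succ_le _ _).trans (le_max_right _ _)
      | some p =>
        obtain ⟨m0, l'⟩ := p
        rw [extractMin, h1] at h
        simp at h
        rw [← h.2]
        cases d with
        | zero =>
          have := ihl h1 0
          simp only [msz_zero, size] at this ⊢
          omega
        | succ d =>
          rw [msz_succ_node, msz_succ_node]
          exact max_le_max (ihl h1 d) (le_refl _)

lemma delete_msz (t : BT) (x : ℝ) (d : ℕ) : msz d (delete t x) ≤ msz d t := by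
  induction t generalizing d with
  | leaf => rw [show delete leaf x = leaf from rfl]
  | node l v r ihl ihr =>
    rcases lt_trichotomy x v with h1 | h1 | h1
    · rw [delete, if_pos h1]
      cases d with
      | zero =>
        have := ihl 0
        simp only [msz_zero, size] at this ⊢; omega
      | succ d =>
        rw [msz_succ_node, msz_succ_node]
        exact max_le_max (ihl d) (le_refl _)
    · subst h1
      rw [delete]
      simp only [lt_irrefl, if_false]
      cases h2 : extractMax l with
      | some p =>
        obtain ⟨m0, l'⟩ := p
        cases d with
        | zero =>
          have := extractMax_msz h2 0
          simp only [msz_zero, size] at this ⊢; omega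
        | succ d =>
          rw [msz_succ_node, msz_succ_node]
          exact max_le_max (extractMax_msz h2 d) (le_refl _)
      | none =>
        cases h3 : extractMin r with
        | some p =>
          obtain ⟨m0, r'⟩ := p
          cases d with
          | zero =>
            have := extractMin_msz h3 0
            simp only [msz_zero, size] at this ⊢; omega
          | succ d =>
            rw [msz_succ_node, msz_succ_node]
            refine max_le ?_ ?_
            · rw [msz_leaf]; exact Nat.zero_le _
            · exact (extractMin_msz h3 d).trans (le_max_right _ _)
        | none =>
          rw [msz_leaf]; exact Nat.zero_le _
    · rw [delete, if_neg (not_lt.2 h1.le), if_pos h1]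
      cases d with
      | zero =>
        have := ihr 0
        simp only [msz_zero, size] at this ⊢; omega
      | succ d =>
        rw [msz_succ_node, msz_succ_node]
        exact max_le_max (le_refl _) (ihr d)

lemma foldl_delete_msz (L : List ℝ) (t : BT) (d : ℕ) :
    msz d (L.foldl delete t) ≤ msz d t := by
  induction L generalizing t with
  | nil => exact le_refl _
  | cons a L ih => exact (ih (delete t a)).trans (delete_msz t a d)

end BT
namespace BT

/-! ### glueIO -/

/-- Interleave: `glueIO as ls = ls₀ ++ a₁ :: ls₁ ++ a₂ :: …`. -/
def glueIO : List ℝ → List (List ℝ) → List ℝ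
  | [], ls => ls.headD []
  | a :: as, ls => ls.headD [] ++ a :: glueIO as ls.tail

lemma glueIO_nil (ls : List (List ℝ)) : glueIO [] ls = ls.headD [] := rfl

lemma glueIO_cons (a : ℝ) (as : List ℝ) (ls : List (List ℝ)) :
    glueIO (a :: as) ls = ls.headD [] ++ a :: glueIO as ls.tail := rfl

lemma glueIO_append (as1 : List ℝ) (a : ℝ) (as2 : List ℝ) (ls : List (List ℝ)) :
    glueIO (as1 ++ a :: as2) ls =
      glueIO as1 ls ++ a :: glueIO as2 (ls.drop (as1.length + 1)) := by
  induction as1 generalizing ls with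
  | nil => simp [glueIO_nil, glueIO_cons, List.drop_one]
  | cons b as1 ih =>
    rw [List.cons_append, glueIO_cons, glueIO_cons, ih (ls.tail), ← List.drop_one,
      List.drop_drop]
    simp [List.append_assoc]
    rw [Nat.add_comm 1 (as1.length + 1)]

lemma glueIO_prefix (as : List ℝ) (ls1 ls2 : List (List ℝ)) (h : ls1.length = as.length + 1) :
    glueIO as (ls1 ++ ls2) = glueIO as ls1 := by
  induction as generalizing ls1 with
  | nil =>
    match ls1, h with
    | [l], _ => simp [glueIO_nil]
  | cons a as ih =>
    match ls1, h with
    | l0 :: ls1', h =>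
      rw [glueIO_cons, glueIO_cons]
      simp only [List.cons_append, List.headD_cons, List.tail_cons]
      rw [ih ls1' (by simpa using h)]

lemma mem_glueIO {x : ℝ} : ∀ (as : List ℝ) (ls : List (List ℝ)),
    x ∈ glueIO as ls → x ∈ as ∨ ∃ l ∈ ls, x ∈ l := by
  intro as
  induction as with
  | nil =>
    intro ls h
    rw [glueIO_nil] at h
    cases ls with
    | nil => simp at h
    | cons l0 ls' => exact Or.inr ⟨l0, List.mem_cons_self, h⟩
  | cons a as ih =>
    intro ls h
    rw [glueIO_cons] at h
    rcases List.mem_append.1 h with h | h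
    · cases ls with
      | nil => simp at h
      | cons l0 ls' => exact Or.inr ⟨l0, List.mem_cons_self, h⟩
    · rcases List.mem_cons.1 h with h | h
      · exact Or.inl (h ▸ List.mem_cons_self)
      · rcases ih ls.tail h with h | ⟨l, hl, hxl⟩
        · exact Or.inl (List.mem_cons_of_mem _ h)
        · exact Or.inr ⟨l, List.mem_of_mem_tail hl, hxl⟩

lemma sublist_glueIO (as : List ℝ) (ls : List (List ℝ)) : as.Sublist (glueIO as ls) := by
  induction as generalizing ls with
  | nil => simp
  | cons a as ih =>
    rw [glueIO_cons]
    exact ((ih ls.tail).cons₂ a).trans (List.sublist_append_right _ _)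

lemma glueIO_length (as : List ℝ) (ls : List (List ℝ)) (h : ls.length = as.length + 1) :
    (glueIO as ls).length = as.length + (ls.map List.length).sum := by
  induction as generalizing ls with
  | nil =>
    match ls, h with
    | [l], _ => simp [glueIO_nil]
  | cons a as ih =>
    match ls, h with
    | l0 :: ls', h =>
      rw [glueIO_cons]
      simp only [List.headD_cons, List.tail_cons, List.length_append, List.length_cons]
      rw [ih ls' (by simpa using h)]
      simp [List.map_cons, List.sum_cons]
      omega

lemma glueIO_toFinset (as : List ℝ) (ls : List (List ℝ)) (h : ls.length = as.length + 1) :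
    (glueIO as ls).toFinset = as.toFinset ∪ ls.foldr (fun l acc => l.toFinset ∪ acc) ∅ := by
  induction as generalizing ls with
  | nil =>
    match ls, h with
    | [l], _ => simp [glueIO_nil]
  | cons a as ih =>
    match ls, h with
    | l0 :: ls', h =>
      rw [glueIO_cons]
      simp only [List.headD_cons, List.tail_cons, List.toFinset_append, List.toFinset_cons]
      rw [ih ls' (by simpa using h)]
      simp only [List.foldr_cons]
      ext z; simp [Finset.mem_insert]; tauto

lemma glueIO_infix (as : List ℝ) (ls : List (List ℝ)) (l : List ℝ)
    (hl : l ∈ ls.take (as.length + 1)) :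
    ∃ l1 l2, glueIO as ls = l1 ++ l ++ l2 ∧ ∀ a ∈ as, a ∈ l1 ∨ a ∈ l2 := by
  induction as generalizing ls with
  | nil =>
    cases ls with
    | nil => simp at hl
    | cons l0 ls' =>
      simp only [List.length_nil, Nat.zero_add, List.take_cons, List.take_zero] at hl
      simp at hl
      subst hl
      exact ⟨[], [], by simp [glueIO_nil], by simp⟩
  | cons a as ih =>
    cases ls with
    | nil => simp at hl
    | cons l0 ls' =>
      rw [glueIO_cons]
      simp only [List.headD_cons, List.tail_cons]
      rcases List.mem_cons.1 (by simpa [List.take_cons] using hl : l ∈ l0 :: ls'.take (as.length + 1)) with h | h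
      · subst h
        refine ⟨[], a :: glueIO as ls', by simp, ?_⟩
        intro a' ha'
        rcases List.mem_cons.1 ha' with h | h
        · exact Or.inr (h ▸ List.mem_cons_self)
        · exact Or.inr (List.mem_cons_of_mem _ ((sublist_glueIO as ls').mem h))
      · obtain ⟨l1, l2, heq, hmem⟩ := ih ls' h
        refine ⟨l0 ++ a :: l1, l2, by rw [heq]; simp, ?_⟩
        intro a' ha'
        rcases List.mem_cons.1 ha' with h' | h'
        · exact Or.inl (by simp [h'])
        · rcases hmem a' h' with h'' | h''
          · exact Or.inl (by simp [h''])
          · exact Or.inr h''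

/-! ### shIO : inorder of the shallow nodes -/

/-- In-order list of values at depth `< k`. -/
def shIO : ℕ → BT → List ℝ
  | 0, _ => []
  | _+1, .leaf => []
  | k+1, .node l v r => shIO k l ++ v :: shIO k r

lemma slots_length_shIO (k : ℕ) (t : BT) : (slots k t).length = (shIO k t).length + 1 := by
  induction k generalizing t with
  | zero => simp [slots, shIO]
  | succ k ih =>
    cases t with
    | leaf => simp [slots, shIO]
    | node l v r =>
      rw [slots_succ_node, shIO]
      simp [List.length_append, ih l, ih r]
      omega

lemma inorder_decomp_slots (k : ℕ) (t : BT) :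
    inorder t = glueIO (shIO k t) ((slots k t).map inorder) := by
  induction k generalizing t with
  | zero => simp [slots, shIO, glueIO_nil]
  | succ k ih =>
    cases t with
    | leaf => simp [slots, shIO, glueIO_nil, inorder]
    | node l v r =>
      have hlen : ((slots k l).map inorder).length = (shIO k l).length + 1 := by
        rw [List.length_map, slots_length_shIO]
      rw [slots_succ_node, shIO, inorder_node, List.map_append, glueIO_append,
        glueIO_prefix _ _ _ hlen, ← ih l, ← hlen, List.drop_left, ← ih r]

lemma shIO_toFinset {t : BT} (ht : isBST t) (k : ℕ) :
    (shIO k t).toFinset = shallowNodes t k := by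
  induction k generalizing t with
  | zero => simp [shIO, shallowNodes]
  | succ k ih =>
    cases t with
    | leaf => simp [shIO, shallowNodes, nodes]
    | node l v0 r =>
      obtain ⟨hl, hr, bl, br⟩ := ht
      rw [shIO]
      simp only [List.toFinset_append, List.toFinset_cons]
      rw [ih bl, ih br]
      ext z
      simp only [Finset.mem_union, Finset.mem_insert, shallowNodes, Finset.mem_filter,
        nodes_node]
      constructor
      · rintro (⟨hz, hlen⟩ | hz | ⟨hz, hlen⟩)
        · refine ⟨by simp [hz], ?_⟩
          rw [sig, if_pos (hl z hz)]; simpa using hlen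
        · subst hz
          refine ⟨by simp, ?_⟩
          rw [sig]; simp
        · refine ⟨by simp [hz], ?_⟩
          rw [sig, if_neg (not_lt.2 (hr z hz).le), if_pos (hr z hz)]; simpa using hlen
      · rintro ⟨hz, hlen⟩
        rcases hz with rfl | h | h
        · exact Or.inr (Or.inl rfl)
        · refine Or.inl ⟨h, ?_⟩
          rw [sig, if_pos (hl z h)] at hlen; simpa using hlen
        · refine Or.inr (Or.inr ⟨h, ?_⟩)
          rw [sig, if_neg (not_lt.2 (hr z h).le), if_pos (hr z h)] at hlen
          simpa using hlen

end BT
namespace BT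

/-! ### sorted list helpers -/

lemma filter_eq_nil_of_forall {L : List ℝ} {p : ℝ → Prop} [DecidablePred p]
    (h : ∀ z ∈ L, ¬ p z) : L.filter (fun z => p z) = [] := by
  apply List.filter_eq_nil_iff.2
  intro a ha
  simpa using h a ha

lemma filter_eq_self_of_forall {L : List ℝ} {p : ℝ → Prop} [DecidablePred p]
    (h : ∀ z ∈ L, p z) : L.filter (fun z => p z) = L := by
  apply List.filter_eq_self.2
  intro a ha
  simpa using h a ha

lemma sorted_split {L : List ℝ} (h : L.Pairwise (· < ·)) {p : ℝ} (hp : p ∈ L) :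
    L = L.filter (fun z => z < p) ++ p :: L.filter (fun z => p < z) := by
  induction L with
  | nil => cases hp
  | cons a L ih =>
    have hall : ∀ z ∈ L, a < z := (List.pairwise_cons.1 h).1
    rcases List.mem_cons.1 hp with rfl | hp'
    · rw [List.filter_cons, List.filter_cons]
      simp only [lt_irrefl, decide_false, Bool.false_eq_true, if_false]
      rw [filter_eq_nil_of_forall (fun z hz => not_lt.2 (hall z hz).le),
        filter_eq_self_of_forall hall]
      simp
    · have ha : a < p := hall p hp'
      rw [List.filter_cons, List.filter_cons]
      simp only [ha, decide_true, if_true, not_lt.2 ha.le, decide_false,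
        Bool.false_eq_true, if_false]
      rw [List.cons_append, ← ih ((List.pairwise_cons.1 h).2) hp']

lemma take_lt_pivot {xs : List ℝ} (h : xs.Pairwise (· < ·)) {n : ℕ} (hn : n < xs.length) :
    ∀ x ∈ xs.take n, x < xs[n] := by
  intro x hx
  obtain ⟨i, hi, rfl⟩ := List.mem_iff_getElem.1 hx
  rw [List.length_take] at hi
  rw [List.getElem_take]
  exact List.pairwise_iff_getElem.1 h i n (by omega) hn (by omega)

lemma drop_gt_pivot {xs : List ℝ} (h : xs.Pairwise (· < ·)) {n : ℕ} (hn : n < xs.length) :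
    ∀ x ∈ xs.drop (n+1), xs[n] < x := by
  intro x hx
  obtain ⟨i, hi, rfl⟩ := List.mem_iff_getElem.1 hx
  rw [List.length_drop] at hi
  rw [List.getElem_drop]
  exact List.pairwise_iff_getElem.1 h n (n+1+i) hn (by omega) (by omega)

/-! ### split -/

lemma split_inorder {t : BT} (ht : isBST t) (x : ℝ) :
    inorder (split t x).1 = (inorder t).filter (fun z => z < x) ∧
    inorder (split t x).2 = (inorder t).filter (fun z => x < z) := by
  induction t with
  | leaf => constructor <;> rfl
  | node l v r ihl ihr =>
    obtain ⟨hl, hr, bl, br⟩ := ht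
    have memr : ∀ z ∈ inorder r, v < z := fun z hz => hr z ((mem_inorder_iff r z).1 hz)
    have meml : ∀ z ∈ inorder l, z < v := fun z hz => hl z ((mem_inorder_iff l z).1 hz)
    rcases lt_trichotomy x v with h1 | h1 | h1
    · rw [split]
      simp only [if_pos h1]
      constructor
      · rw [(ihl bl).1, inorder_node, List.filter_append, List.filter_cons]
        simp only [not_lt.2 h1.le, decide_false, Bool.false_eq_true, if_false]
        rw [filter_eq_nil_of_forall (fun z hz => not_lt.2 (h1.trans (memr z hz)).le)]
        simp
      · rw [inorder_node, inorder_node, (ihl bl).2, List.filter_append, List.filter_cons]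
        simp only [h1, decide_true, if_true]
        rw [filter_eq_self_of_forall (fun z hz => h1.trans (memr z hz))]
    · subst h1
      rw [split]
      simp only [lt_irrefl, if_false]
      constructor
      · rw [inorder_node, List.filter_append, List.filter_cons]
        simp only [lt_irrefl, decide_false, Bool.false_eq_true, if_false]
        rw [filter_eq_nil_of_forall (fun z hz => not_lt.2 (memr z hz).le),
          filter_eq_self_of_forall meml]
        simp
      · rw [inorder_node, List.filter_append, List.filter_cons]
        simp only [lt_irrefl, decide_false, Bool.false_eq_true, if_false]
        rw [filter_eq_nil_of_forall (fun z hz => not_lt.2 (meml z hz).le),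
          filter_eq_self_of_forall memr]
        simp
    · rw [split]
      simp only [if_neg (not_lt.2 h1.le), if_pos h1]
      constructor
      · rw [inorder_node, inorder_node, (ihr br).1, List.filter_append, List.filter_cons]
        simp only [h1, decide_true, if_true]
        rw [filter_eq_self_of_forall (fun z hz => (meml z hz).trans h1)]
      · rw [(ihr br).2, inorder_node, List.filter_append, List.filter_cons]
        simp only [not_lt.2 h1.le, decide_false, Bool.false_eq_true, if_false]
        rw [filter_eq_nil_of_forall (fun z hz => not_lt.2 ((meml z hz).trans h1).le)]
        simp

lemma split_isBST {t : BT} (ht : isBST t) (x : ℝ) :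
    isBST (split t x).1 ∧ isBST (split t x).2 := by
  constructor
  · apply isBST_of_pairwise
    rw [(split_inorder ht x).1]
    exact (inorder_pairwise ht).sublist (List.filter_sublist)
  · apply isBST_of_pairwise
    rw [(split_inorder ht x).2]
    exact (inorder_pairwise ht).sublist (List.filter_sublist)

/-! ### multiSplit -/

lemma multiSplit_nil (t : BT) : multiSplit t [] = [t] := by
  rw [multiSplit]

lemma multiSplit_cons (t : BT) (x₀ : ℝ) (xs' : List ℝ) :
    multiSplit t (x₀ :: xs') =
      multiSplit (split t ((x₀ :: xs').getD (((x₀ :: xs').length + 1) / 2 - 1) 0)).1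
          ((x₀ :: xs').take (((x₀ :: xs').length + 1) / 2 - 1)) ++
      multiSplit (split t ((x₀ :: xs').getD (((x₀ :: xs').length + 1) / 2 - 1) 0)).2
          ((x₀ :: xs').drop (((x₀ :: xs').length + 1) / 2)) := by
  rw [multiSplit]

lemma multiSplit_length : ∀ (n : ℕ) (xs : List ℝ) (t : BT), xs.length ≤ n →
    (multiSplit t xs).length = xs.length + 1 := by
  intro n
  induction n with
  | zero =>
    intro xs t h
    have : xs = [] := List.length_eq_zero_iff.1 (Nat.le_zero.1 h)
    subst this
    rw [multiSplit_nil]; rfl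
  | succ n ih =>
    intro xs t h
    cases xs with
    | nil => rw [multiSplit_nil]; rfl
    | cons x₀ xs' =>
      rw [multiSplit_cons, List.length_append]
      set L := x₀ :: xs' with hL
      have hlen : L.length = xs'.length + 1 := rfl
      have h1 : (L.take ((L.length + 1) / 2 - 1)).length = (L.length + 1) / 2 - 1 := by
        rw [List.length_take]; omega
      have h2 : (L.drop ((L.length + 1) / 2)).length = L.length - (L.length + 1) / 2 := by
        rw [List.length_drop]
      rw [ih _ _ (by omega), ih _ _ (by omega), h1, h2]
      omega

lemma multiSplit_decomp : ∀ (n : ℕ) (xs : List ℝ) (t : BT), xs.length ≤ n → isBST t →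
    xs.Pairwise (· < ·) → (∀ x ∈ xs, x ∈ inorder t) →
    (inorder t = glueIO xs ((multiSplit t xs).map inorder)) ∧
    (∀ P ∈ multiSplit t xs, isBST P) := by
  intro n
  induction n with
  | zero =>
    intro xs t h _ _ _
    have : xs = [] := List.length_eq_zero_iff.1 (Nat.le_zero.1 h)
    subst this
    rw [multiSplit_nil]
    refine ⟨by simp [glueIO_nil], ?_⟩
    intro P hP
    rw [List.mem_singleton] at hP
    exact hP ▸ ‹isBST t›
  | succ n ih =>
    intro xs t h ht hpw hmem
    cases xs with
    | nil =>
      rw [multiSplit_nil]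
      refine ⟨by simp [glueIO_nil], ?_⟩
      intro P hP
      rw [List.mem_singleton] at hP
      exact hP ▸ ht
    | cons x₀ xs' =>
      set L := x₀ :: xs' with hL
      have hLne : L.length = xs'.length + 1 := rfl
      set n1 := (L.length + 1) / 2 - 1 with hn1
      have hn1lt : n1 < L.length := by omega
      set p := L.getD n1 0 with hp
      have hpel : p = L[n1] := List.getD_eq_getElem L 0 hn1lt
      have hpmem : p ∈ L := hpel ▸ List.getElem_mem hn1lt
      have hdropeq : L.drop n1 = L[n1] :: L.drop (n1 + 1) := List.drop_eq_getElem_cons hn1lt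
      have hLdecomp : L = L.take n1 ++ p :: L.drop (n1 + 1) := by
        rw [hpel, ← hdropeq, List.take_append_drop]
      have hhalf : (L.length + 1) / 2 = n1 + 1 := by omega
      -- the two halves
      have hsp := split_inorder ht p
      have hbst := split_isBST ht p
      have htake_pw : (L.take n1).Pairwise (· < ·) :=
        hpw.sublist (List.take_sublist _ _)
      have hdrop_pw : (L.drop (n1+1)).Pairwise (· < ·) :=
        hpw.sublist (List.drop_sublist _ _)
      have htake_mem : ∀ x ∈ L.take n1, x ∈ inorder (split t p).1 := by
        intro x hx
        rw [hsp.1, List.mem_filter]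
        refine ⟨hmem x (List.mem_of_mem_take hx), ?_⟩
        simp only [decide_eq_true_eq]
        rw [hpel]
        exact take_lt_pivot hpw hn1lt x hx
      have hdrop_mem : ∀ x ∈ L.drop (n1+1), x ∈ inorder (split t p).2 := by
        intro x hx
        rw [hsp.2, List.mem_filter]
        refine ⟨hmem x (List.mem_of_mem_drop hx), ?_⟩
        simp only [decide_eq_true_eq]
        rw [hpel]
        exact drop_gt_pivot hpw hn1lt x hx
      have hlen1 : (L.take n1).length ≤ n := by rw [List.length_take]; omega
      have hlen2 : (L.drop (n1+1)).length ≤ n := by rw [List.length_drop]; omega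
      have IH1 := ih (L.take n1) (split t p).1 hlen1 hbst.1 htake_pw htake_mem
      have IH2 := ih (L.drop (n1+1)) (split t p).2 hlen2 hbst.2 hdrop_pw hdrop_mem
      have hmslen : ((multiSplit (split t p).1 (L.take n1)).map inorder).length =
          (L.take n1).length + 1 := by
        rw [List.length_map, multiSplit_length n _ _ hlen1]
      constructor
      · rw [multiSplit_cons, ← hp, ← hn1, hhalf, ← hL, List.map_append]
        set A := List.map inorder ((split t p).1.multiSplit (L.take n1)) with hA
        set B := List.map inorder ((split t p).2.multiSplit (L.drop (n1+1))) with hB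
        rw [show (glueIO L (A ++ B)) = glueIO (L.take n1 ++ p :: L.drop (n1+1)) (A ++ B) by
          rw [← hLdecomp]]
        rw [glueIO_append, glueIO_prefix _ _ _ hmslen, ← IH1.1, ← hmslen, List.drop_left,
          ← IH2.1, hsp.1, hsp.2]
        exact sorted_split (inorder_pairwise ht) (hmem p hpmem)
      · rw [multiSplit_cons, ← hp, ← hn1, hhalf, ← hL]
        intro P hP
        rcases List.mem_append.1 hP with hP | hP
        · exact IH1.2 P hP
        · exact IH2.2 P hP

end BT
namespace BT

/-! ### glue -/

lemma glue_snd (t : BT) (ts : List BT) : (glue t ts).2 = ts.drop (size t + 1) := by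
  induction t generalizing ts with
  | leaf => simp [glue, size, List.drop_one]
  | node l v r ihl ihr =>
    show (glue r (glue l ts).2).2 = _
    rw [ihr, ihl, List.drop_drop]
    congr 1
    simp [size]; omega

lemma glue_fst_inorder (t : BT) (ts : List BT) :
    inorder (glue t ts).1 = glueIO (inorder t) (ts.map inorder) := by
  induction t generalizing ts with
  | leaf =>
    show inorder (ts.headD leaf) = (ts.map inorder).headD []
    cases ts with
    | nil => rfl
    | cons t1 ts' => simp
  | node l v r ihl ihr =>
    have hg : (glue (node l v r) ts).1 = node (glue l ts).1 v (glue r (glue l ts).2).1 := rfl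
    rw [hg, inorder_node, ihl ts, ihr ((glue l ts).2), glue_snd, inorder_node,
      glueIO_append, inorder_length, ← List.map_drop]

lemma foldr_max_sublist {l1 l2 : List ℕ} (h : l1.Sublist l2) :
    l1.foldr max 0 ≤ l2.foldr max 0 := by
  apply foldr_max_le
  intro x hx
  exact le_foldr_max (h.mem hx)

lemma slots_glue_le (d : ℕ) (t0 : BT) (ts : List BT)
    (h : ∀ u ∈ slots d t0, u = leaf) :
    ∀ s ∈ slots d (glue t0 ts).1, size s ≤ (ts.map size).foldr max 0 := by
  induction t0 generalizing d ts with
  | leaf =>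
    intro s hs
    show size s ≤ _
    have hhead : (glue leaf ts).1 = ts.headD leaf := rfl
    rw [hhead] at hs
    cases ts with
    | nil =>
      have := slots_size_le hs
      simpa [size] using this
    | cons t1 ts' =>
      exact (slots_size_le hs).trans (le_foldr_max (List.mem_map_of_mem (f := size) (List.mem_cons_self)))
  | node l v r ihl ihr =>
    intro s hs
    cases d with
    | zero =>
      exact absurd (h (node l v r) (by rw [slots_zero]; exact List.mem_singleton.2 rfl))
        (by simp)
    | succ d =>
      have hglue : (glue (node l v r) ts).1 = node (glue l ts).1 v (glue r (glue l ts).2).1 := rfl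
      rw [hglue, slots_succ_node] at hs
      have hl' : ∀ u ∈ slots d l, u = leaf := fun u hu =>
        h u (by rw [slots_succ_node]; exact List.mem_append_left _ hu)
      have hr' : ∀ u ∈ slots d r, u = leaf := fun u hu =>
        h u (by rw [slots_succ_node]; exact List.mem_append_right _ hu)
      rcases List.mem_append.1 hs with hs | hs
      · exact ihl d ts hl' s hs
      · refine (ihr d (glue l ts).2 hr' s hs).trans ?_
        rw [glue_snd]
        exact foldr_max_sublist ((List.drop_sublist _ _).map size)

/-! ### the index window -/

lemma rank_window (c n a g : ℕ) (hc : 2 ≤ c) (hn : c ≤ n) (hg : g = n / c)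
    (hub : a + g + 1 ≤ n) :
    ∃ j, j < c - 1 ∧ a ≤ (j+1) * n / c ∧ (j+1) * n / c ≤ a + g := by
  have hc0 : 0 < c := by omega
  have hn0 : 0 < n := by omega
  have hmod := Nat.div_add_mod n c
  set qq := n / c with hq
  set rr := n % c with hr
  have hrlt : rr < c := Nat.mod_lt _ hc0
  refine ⟨a * c / n, ?_, ?_, ?_⟩
  · rw [Nat.div_lt_iff_lt_mul hn0]
    have k1 : (a + qq + 1) * c ≤ n * c := Nat.mul_le_mul_right c (by omega)
    have k2 : (a + qq + 1) * c = a * c + (c * qq + c) := by ring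
    have k3 : (c - 1) * n = c * n - n := by
      rw [Nat.sub_one_mul]
    have k4 : n * c = c * n := Nat.mul_comm _ _
    omega
  · rw [Nat.le_div_iff_mul_le hc0]
    have hmod2 := Nat.div_add_mod (a * c) n
    have hlt : a * c % n < n := Nat.mod_lt _ hn0
    have e : (a * c / n + 1) * n = n * (a * c / n) + n := by ring
    omega
  · have h1 : (a * c / n + 1) * n ≤ a * c + n := by
      have := Nat.div_mul_le_self (a * c) n
      have e : (a * c / n + 1) * n = (a * c / n) * n + n := by ring
      omega
    calc (a * c / n + 1) * n / c ≤ (a * c + n) / c := Nat.div_le_div_right h1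
    _ = a + n / c := by
        rw [Nat.add_comm (a * c) n, Nat.add_mul_div_right _ _ hc0]
        omega
    _ = a + g := by rw [hg]

/-! ### counting between rank elements -/

lemma count_between (c : ℕ) (hc : 2 ≤ c) (L : List ℝ) (hpw : L.Pairwise (· < ·))
    (hn : c ≤ L.length) (B : Finset ℝ)
    (hBL : ∀ b ∈ B, b ∈ L)
    (hconv : ∀ u ∈ B, ∀ w ∈ B, ∀ v ∈ L, u ≤ v → v ≤ w → v ∈ B)
    (hrank : ∀ j, j < c - 1 → L.getD ((j+1) * L.length / c) 0 ∉ B) :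
    B.card ≤ L.length / c := by
  by_contra hcon
  push_neg at hcon
  have hBpos : 0 < B.card := lt_of_le_of_lt (Nat.zero_le _) hcon
  have hBne : B.Nonempty := Finset.card_pos.1 hBpos
  set u0 := B.min' hBne with hu0
  set w0 := B.max' hBne with hw0
  have hu0B : u0 ∈ B := B.min'_mem hBne
  have hw0B : w0 ∈ B := B.max'_mem hBne
  obtain ⟨a, ha, hLa⟩ := List.mem_iff_getElem.1 (hBL u0 hu0B)
  obtain ⟨b, hb, hLb⟩ := List.mem_iff_getElem.1 (hBL w0 hw0B)
  have mono : ∀ (i j : ℕ) (hi : i < L.length) (hj : j < L.length), i < j → L[i] < L[j] :=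
    fun i j hi hj hij => List.pairwise_iff_getElem.1 hpw i j hi hj hij
  have hab : a ≤ b := by
    by_contra hcon2
    have : L[b] < L[a] := mono b a hb ha (by omega)
    rw [hLa, hLb] at this
    exact absurd (B.min'_le w0 hw0B) (not_le.2 this)
  have hwin : ∀ i, a ≤ i → i ≤ b → ∀ (hi : i < L.length), L[i] ∈ B := by
    intro i hai hib hi
    apply hconv u0 hu0B w0 hw0B _ (List.getElem_mem hi)
    · rw [← hLa]
      rcases Nat.eq_or_lt_of_le hai with rfl | h
      · exact le_refl _
      · exact (mono a i ha hi h).le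
    · rw [← hLb]
      rcases Nat.eq_or_lt_of_le hib with rfl | h
      · exact le_refl _
      · exact (mono i b hi hb h).le
  have hsub : B ⊆ (Finset.Icc a b).image (fun i => L.getD i 0) := by
    intro v hv
    obtain ⟨i, hi, hLi⟩ := List.mem_iff_getElem.1 (hBL v hv)
    have hai : a ≤ i := by
      by_contra hcon2
      have : L[i] < L[a] := mono i a hi ha (by omega)
      rw [hLa, hLi] at this
      exact absurd (B.min'_le v hv) (not_le.2 this)
    have hib : i ≤ b := by
      by_contra hcon2
      have : L[b] < L[i] := mono b i hb hi (by omega)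
      rw [hLb, hLi] at this
      exact absurd (B.le_max' v hv) (not_le.2 this)
    apply Finset.mem_image.2
    exact ⟨i, Finset.mem_Icc.2 ⟨hai, hib⟩, by rw [List.getD_eq_getElem _ _ hi, hLi]⟩
  have hcard : B.card ≤ b + 1 - a :=
    (Finset.card_le_card hsub).trans ((Finset.card_image_le).trans (by rw [Nat.card_Icc]))
  have hag : a + L.length / c ≤ b := by omega
  obtain ⟨j, hj, hj1, hj2⟩ := rank_window c L.length a (L.length / c) hc hn rfl (by omega)
  have hijn : (j+1) * L.length / c < L.length := by omega
  have : L.getD ((j+1) * L.length / c) 0 ∈ B := by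
    rw [List.getD_eq_getElem _ _ hijn]
    exact hwin _ hj1 (by omega) hijn
  exact hrank j hj this

/-! ### number of shallow nodes -/

/-- Encode a bool list injectively into `ℕ`. -/
def enc : List Bool → ℕ
  | [] => 0
  | b :: l => 2 * enc l + (if b then 2 else 1)

lemma enc_inj : ∀ l1 l2 : List Bool, enc l1 = enc l2 → l1 = l2 := by
  intro l1
  induction l1 with
  | nil =>
    intro l2 h
    cases l2 with
    | nil => rfl
    | cons b l => rw [enc, enc] at h; cases b <;> simp at h <;> omega
  | cons b1 l1 ih =>
    intro l2 h
    cases l2 with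
    | nil => rw [enc, enc] at h; cases b1 <;> simp at h <;> omega
    | cons b2 l2 =>
      rw [enc, enc] at h
      have : b1 = b2 ∧ enc l1 = enc l2 := by
        cases b1 <;> cases b2 <;> simp at h ⊢ <;> omega
      rw [this.1, ih l2 this.2]

lemma enc_le (l : List Bool) : enc l ≤ 2 ^ (l.length + 1) - 2 := by
  induction l with
  | nil => simp [enc]
  | cons b l ih =>
    rw [enc]
    have h1 : 2 ^ (l.length + 1 + 1) = 2 * 2 ^ (l.length + 1) := by
      rw [pow_succ]; ring
    have h2 : 2 ≤ 2 ^ (l.length + 1) := by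
      calc 2 = 2 ^ 1 := rfl
      _ ≤ 2 ^ (l.length + 1) := Nat.pow_le_pow_right (by omega) (by omega)
    rw [List.length_cons, h1]
    cases b <;> simp <;> omega

lemma sig_inj {t : BT} (ht : isBST t) {u w : ℝ} (hu : u ∈ nodes t) (hw : w ∈ nodes t)
    (h : sig t u = sig t w) : u = w := by
  induction t with
  | leaf => simp [nodes] at hu
  | node l v0 r ihl ihr =>
    obtain ⟨hl, hr, bl, br⟩ := ht
    have memcase : ∀ z : ℝ, z ∈ nodes (node l v0 r) → z = v0 ∨ z ∈ nodes l ∨ z ∈ nodes r := by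
      intro z hz
      rcases Finset.mem_insert.1 hz with h | h
      · exact Or.inl h
      · rcases Finset.mem_union.1 h with h | h
        · exact Or.inr (Or.inl h)
        · exact Or.inr (Or.inr h)
    have sigl : ∀ z ∈ nodes l, sig (node l v0 r) z = false :: sig l z := by
      intro z hz; rw [sig, if_pos (hl z hz)]
    have sigr : ∀ z ∈ nodes r, sig (node l v0 r) z = true :: sig r z := by
      intro z hz; rw [sig, if_neg (not_lt.2 (hr z hz).le), if_pos (hr z hz)]
    have sigv : sig (node l v0 r) v0 = [] := by rw [sig]; simp
    rcases memcase u hu with hu' | hu' | hu' <;> rcases memcase w hw with hw' | hw' | hw'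
    · rw [hu', hw']
    · subst hu'; rw [sigv, sigl w hw'] at h; simp at h
    · subst hu'; rw [sigv, sigr w hw'] at h; simp at h
    · subst hw'; rw [sigv, sigl u hu'] at h; simp at h
    · rw [sigl u hu', sigl w hw'] at h
      exact ihl bl hu' hw' (by injection h)
    · rw [sigl u hu', sigr w hw'] at h; simp at h
    · subst hw'; rw [sigv, sigr u hu'] at h; simp at h
    · rw [sigr u hu', sigl w hw'] at h; simp at h
    · rw [sigr u hu', sigr w hw'] at h
      exact ihr br hu' hw' (by injection h)

lemma card_shallowNodes_le {t : BT} (ht : isBST t) (k : ℕ) :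
    (shallowNodes t k).card ≤ 2 ^ k - 1 := by
  have : (shallowNodes t k).card ≤ (Finset.range (2 ^ k - 1)).card := by
    apply Finset.card_le_card_of_injOn (fun x => enc (sig t x))
    · intro x hx
      rw [Finset.mem_coe, shallowNodes, Finset.mem_filter] at hx
      rw [Finset.mem_coe, Finset.mem_range]
      have := enc_le (sig t x)
      have hlen : (sig t x).length + 1 ≤ k := hx.2
      have hpow : 2 ^ ((sig t x).length + 1) ≤ 2 ^ k := Nat.pow_le_pow_right (by omega) hlen
      have h2k : 2 ≤ 2 ^ k := by
        calc 2 = 2 ^ 1 := rfl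
        _ ≤ 2 ^ k := Nat.pow_le_pow_right (by omega) (by omega)
      show enc (sig t x) < 2 ^ k - 1
      omega
    · intro x hx y hy hxy
      simp only [Finset.mem_coe, shallowNodes, Finset.mem_filter] at hx hy
      exact sig_inj ht hx.1 hy.1 (enc_inj _ _ hxy)
  simpa using this

end BT
namespace BT

/-! ### glueIO associativity and sorted extensionality -/

lemma glueIO_assoc : ∀ (as : List ℝ) (xss : List (List ℝ)) (mss : List (List (List ℝ))),
    xss.length = as.length + 1 →
    List.Forall₂ (fun (xs : List ℝ) (ms : List (List ℝ)) => ms.length = xs.length + 1) xss mss →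
    glueIO as (List.zipWith glueIO xss mss) = glueIO (glueIO as xss) mss.flatten := by
  intro as
  induction as with
  | nil =>
    intro xss mss hlen hf
    match xss, hlen with
    | [x0], _ =>
      match mss, hf with
      | [m0], hf =>
        have hm0 : m0.length = x0.length + 1 := by
          cases hf with
          | cons h _ => exact h
        simp only [List.zipWith, glueIO_nil, List.headD_cons, List.flatten]
        rw [List.append_eq, List.append_nil]
  | cons a as ih =>
    intro xss mss hlen hf
    match xss, hlen with
    | x0 :: xss', hlen =>
      match mss, hf with
      | m0 :: mss', hf =>
        have hm0 : m0.length = x0.length + 1 := by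
          cases hf with
          | cons h _ => exact h
        have hf' : List.Forall₂
            (fun (xs : List ℝ) (ms : List (List ℝ)) => ms.length = xs.length + 1) xss' mss' := by
          cases hf with
          | cons _ h => exact h
        have hxss' : xss'.length = as.length + 1 := by simpa using hlen
        show glueIO (a :: as) (glueIO x0 m0 :: List.zipWith glueIO xss' mss') = _
        rw [glueIO_cons]
        simp only [List.headD_cons, List.tail_cons]
        rw [ih xss' mss' hxss' hf']
        rw [show glueIO (a :: as) (x0 :: xss') = x0 ++ a :: glueIO as xss' from rfl]
        rw [show (m0 :: mss').flatten = m0 ++ mss'.flatten from rfl]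
        rw [glueIO_append, glueIO_prefix _ _ _ hm0, ← hm0, List.drop_left]

lemma mem_foldr_union {α : Type*} (f : α → Finset ℝ) (l : List α) (x : ℝ) :
    (x ∈ l.foldr (fun a acc => f a ∪ acc) ∅) ↔ ∃ a ∈ l, x ∈ f a := by
  induction l with
  | nil => simp
  | cons a l ih => simp [List.foldr_cons, ih]

lemma sorted_eq_of_toFinset : ∀ (l1 l2 : List ℝ), l1.Pairwise (· < ·) → l2.Pairwise (· < ·) →
    l1.toFinset = l2.toFinset → l1 = l2 := by
  intro l1
  induction l1 with
  | nil =>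
    intro l2 _ _ h
    cases l2 with
    | nil => rfl
    | cons a l2 =>
      exfalso
      have : a ∈ ([] : List ℝ).toFinset := by rw [h]; simp
      simp at this
  | cons a1 l1 ih =>
    intro l2 h1 h2 h
    cases l2 with
    | nil =>
      exfalso
      have : a1 ∈ ([] : List ℝ).toFinset := by rw [← h]; simp
      simp at this
    | cons a2 l2 =>
      have ha1 : a1 ∈ (a2 :: l2).toFinset := by rw [← h]; simp
      have ha2 : a2 ∈ (a1 :: l1).toFinset := by rw [h]; simp
      simp only [List.mem_toFinset, List.mem_cons] at ha1 ha2
      have h1' := List.pairwise_cons.1 h1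
      have h2' := List.pairwise_cons.1 h2
      have heq : a1 = a2 := by
        rcases ha1 with h' | h'
        · exact h'
        · rcases ha2 with h'' | h''
          · exact h''.symm
          · exact absurd (lt_trans (h2'.1 a1 h') (h1'.1 a2 h'')) (lt_irrefl _)
      subst heq
      have hnotin1 : a1 ∉ l1 := fun hmem => lt_irrefl a1 (h1'.1 a1 hmem)
      have hnotin2 : a1 ∉ l2 := fun hmem => lt_irrefl a1 (h2'.1 a1 hmem)
      have htails : l1.toFinset = l2.toFinset := by
        have e1 : (a1 :: l1).toFinset = insert a1 l1.toFinset := by simp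
        have e2 : (a1 :: l2).toFinset = insert a1 l2.toFinset := by simp
        rw [e1, e2] at h
        ext z
        constructor
        · intro hz
          have : z ∈ insert a1 l2.toFinset := h ▸ Finset.mem_insert_of_mem hz
          rcases Finset.mem_insert.1 this with rfl | hz'
          · exact absurd (List.mem_toFinset.1 hz) hnotin1
          · exact hz'
        · intro hz
          have : z ∈ insert a1 l1.toFinset := h.symm ▸ Finset.mem_insert_of_mem hz
          rcases Finset.mem_insert.1 this with rfl | hz'
          · exact absurd (List.mem_toFinset.1 hz) hnotin2
          · exact hz'
      rw [ih l2 h1'.2 h2'.2 htails]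

end BT
namespace BT

lemma forall₂_map_map {α : Type*} {β γ : Type*} (R : β → γ → Prop) (f : α → β) (g : α → γ)
    (l : List α) (h : ∀ a ∈ l, R (f a) (g a)) : List.Forall₂ R (l.map f) (l.map g) := by
  induction l with
  | nil => simp
  | cons a l ih =>
    simp only [List.map_cons]
    exact List.Forall₂.cons (h a (List.mem_cons_self))
      (ih fun a ha => h a (List.mem_cons_of_mem _ ha))

lemma sum_map_add_one {α : Type*} (f : α → ℕ) (l : List α) :
    (l.map (fun a => f a + 1)).sum = (l.map f).sum + l.length := by
  induction l with
  | nil => simp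
  | cons a l ih => simp [List.map_cons, List.sum_cons, ih]; omega

lemma two_le_two_pow {k : ℕ} (hk : 1 ≤ k) : 2 ≤ 2 ^ k := by
  calc 2 = 2 ^ 1 := rfl
  _ ≤ 2 ^ k := Nat.pow_le_pow_right (by omega) hk

lemma rankElems_subset_nodes {tx : BT} (htx : isBST tx) {k : ℕ} (hn : 2 ^ k ≤ size tx) :
    ∀ x ∈ rankElems tx k, x ∈ nodes tx := by
  intro x hx
  rw [rankElems] at hx
  obtain ⟨j, hj, rfl⟩ := List.mem_map.1 hx
  rw [List.mem_range] at hj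
  have hpow : 0 < 2 ^ k := Nat.pow_pos (by omega)
  have hidx : (j + 1) * size tx / 2 ^ k < size tx := by
    rw [Nat.div_lt_iff_lt_mul hpow]
    have h1 : j + 1 < 2 ^ k := by omega
    have h2 : 0 < size tx := by omega
    calc (j + 1) * size tx < 2 ^ k * size tx := (Nat.mul_lt_mul_right h2).2 h1
    _ = size tx * 2 ^ k := Nat.mul_comm _ _
  have hidx' : (j + 1) * size tx / 2 ^ k < (inorder tx).length := by
    rwa [inorder_length]
  rw [List.getD_eq_getElem _ _ hidx']
  exact (mem_inorder_iff _ _).1 (List.getElem_mem hidx')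

lemma balance_glue (k : ℕ) (hk : 1 ≤ k) (tx t0 : BT) (htx : isBST tx)
    (hn : 2 ^ k ≤ size tx)
    (ht0 : IsPerfBalBST (shallowNodes tx k ∪ (rankElems tx k).toFinset) t0) :
    inorder (glue t0 (balParts tx k)).1 = inorder tx ∧
    ∀ P ∈ balParts tx k, isBST P ∧ size P ≤ size tx / 2 ^ k := by
  have hparts : balParts tx k =
      (slots k tx).flatMap (fun ti => multiSplit ti
        ((inorder ti).filter (fun x => x ∈ rankElems tx k))) := rfl
  have hslot : ∀ ti ∈ slots k tx,
      inorder ti = glueIO ((inorder ti).filter (fun x => x ∈ rankElems tx k))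
        ((multiSplit ti ((inorder ti).filter (fun x => x ∈ rankElems tx k))).map inorder) ∧
      ∀ P ∈ multiSplit ti ((inorder ti).filter (fun x => x ∈ rankElems tx k)), isBST P := by
    intro ti hti
    have hbst : isBST ti := slots_isBST htx hti
    have hpwf : ((inorder ti).filter (fun x => x ∈ rankElems tx k)).Pairwise (· < ·) :=
      (inorder_pairwise hbst).sublist (List.filter_sublist)
    have hmemf : ∀ x ∈ (inorder ti).filter (fun x => x ∈ rankElems tx k), x ∈ inorder ti :=
      fun x hx => List.mem_of_mem_filter hx
    exact multiSplit_decomp _ _ _ (le_refl _) hbst hpwf hmemf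
  set AA := glueIO (shIO k tx)
    ((slots k tx).map (fun ti => (inorder ti).filter (fun x => x ∈ rankElems tx k))) with hAA
  have hlenAA1 : ((slots k tx).map
      (fun ti => (inorder ti).filter (fun x => x ∈ rankElems tx k))).length =
      (shIO k tx).length + 1 := by
    rw [List.length_map, slots_length_shIO]
  have hmaster : inorder tx = glueIO AA ((balParts tx k).map inorder) := by
    have step1 := inorder_decomp_slots k tx
    have step2 : (slots k tx).map inorder =
        List.zipWith glueIO
          ((slots k tx).map (fun ti => (inorder ti).filter (fun x => x ∈ rankElems tx k)))
          ((slots k tx).map (fun ti =>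
            (multiSplit ti ((inorder ti).filter (fun x => x ∈ rankElems tx k))).map inorder)) := by
      rw [List.zipWith_map, List.zipWith_self]
      apply List.map_congr_left
      intro ti hti
      exact (hslot ti hti).1
    have hforall : List.Forall₂
        (fun (xs : List ℝ) (ms : List (List ℝ)) => ms.length = xs.length + 1)
        ((slots k tx).map (fun ti => (inorder ti).filter (fun x => x ∈ rankElems tx k)))
        ((slots k tx).map (fun ti =>
          (multiSplit ti ((inorder ti).filter (fun x => x ∈ rankElems tx k))).map inorder)) := by
      apply forall₂_map_map
      intro ti hti
      rw [List.length_map, multiSplit_length _ _ _ (le_refl _)]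
    have step3 := glueIO_assoc (shIO k tx) _ _ hlenAA1 hforall
    have step4 : ((slots k tx).map (fun ti =>
        (multiSplit ti ((inorder ti).filter (fun x => x ∈ rankElems tx k))).map inorder)).flatten
        = (balParts tx k).map inorder := by
      rw [hparts, List.flatMap_def, List.map_flatten, List.map_map]
      rfl
    rw [step1, step2, step3, step4]
  have hAAsub : AA.Sublist (inorder tx) := by
    rw [hmaster]; exact sublist_glueIO _ _
  have hAApw : AA.Pairwise (· < ·) := (inorder_pairwise htx).sublist hAAsub
  have hAAfin : AA.toFinset = shallowNodes tx k ∪ (rankElems tx k).toFinset := by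
    rw [hAA, glueIO_toFinset _ _ hlenAA1, shIO_toFinset htx]
    ext z
    simp only [Finset.mem_union, mem_foldr_union]
    constructor
    · rintro (hz | hz)
      · exact Or.inl hz
      · rcases hz with ⟨ls, hls, hzls⟩
        rcases List.mem_map.1 hls with ⟨ti, hti, rfl⟩
        rw [List.mem_toFinset, List.mem_filter] at hzls
        right
        rw [List.mem_toFinset]
        simpa using hzls.2
    · rintro (hz | hz)
      · exact Or.inl hz
      · rw [List.mem_toFinset] at hz
        by_cases hzZ : (sig tx z).length < k
        · left
          rw [shallowNodes, Finset.mem_filter]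
          exact ⟨rankElems_subset_nodes htx hn z hz, hzZ⟩
        · right
          obtain ⟨ti, hti, hzti, -⟩ :=
            slots_cover htx (rankElems_subset_nodes htx hn z hz) k (by omega)
          refine ⟨(inorder ti).filter (fun x => x ∈ rankElems tx k),
            List.mem_map_of_mem hti, ?_⟩
          rw [List.mem_toFinset, List.mem_filter]
          exact ⟨(mem_inorder_iff _ _).2 hzti, by simpa using hz⟩
  have hAAeq : AA = inorder t0 := by
    apply sorted_eq_of_toFinset _ _ hAApw (inorder_pairwise ht0.1)
    rw [hAAfin, inorder_toFinset, ht0.2.1]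
  have hio : inorder (glue t0 (balParts tx k)).1 = inorder tx := by
    rw [glue_fst_inorder, ← hAAeq, ← hmaster]
  refine ⟨hio, ?_⟩
  intro P hP
  have hPmem := hP
  rw [hparts] at hPmem
  rcases List.mem_flatMap.1 hPmem with ⟨ti, hti, hPti⟩
  have hPbst : isBST P := (hslot ti hti).2 P hPti
  refine ⟨hPbst, ?_⟩
  have hlenparts : (balParts tx k).length = AA.length + 1 := by
    rw [hparts, List.length_flatMap, hAA, glueIO_length _ _ hlenAA1, List.map_map]
    have heq2 : ((slots k tx).map (fun ti => (multiSplit ti ((inorder ti).filter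
        (fun x => x ∈ rankElems tx k))).length)).sum
        = ((slots k tx).map (fun ti => ((inorder ti).filter
          (fun x => x ∈ rankElems tx k)).length + 1)).sum := by
      apply congrArg
      apply List.map_congr_left
      intro ti _
      exact multiSplit_length _ _ _ (le_refl _)
    simp only [Function.comp_def]
    rw [heq2, sum_map_add_one, slots_length_shIO]
    omega
  have hmemtake : inorder P ∈ ((balParts tx k).map inorder).take (AA.length + 1) := by
    have htake : ((balParts tx k).map inorder).take (AA.length + 1) =
        (balParts tx k).map inorder := by
      apply List.take_of_length_le
      rw [List.length_map, hlenparts]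
    rw [htake]
    exact List.mem_map_of_mem hP
  obtain ⟨l1, l2, heq, hsid⟩ :=
    glueIO_infix AA ((balParts tx k).map inorder) (inorder P) hmemtake
  rw [← hmaster] at heq
  have hnodL : (inorder tx).Nodup := inorder_nodup htx
  have hpwL : (inorder tx).Pairwise (· < ·) := inorder_pairwise htx
  have hPinf : (inorder P).Sublist (inorder tx) :=
    List.IsInfix.sublist ⟨l1, l2, heq.symm⟩
  have hPnodup : (inorder P).Nodup := hnodL.sublist hPinf
  have hsize : size P = (inorder P).toFinset.card := by
    rw [List.toFinset_card_of_nodup hPnodup, inorder_length]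
  rw [hsize]
  have hcount := count_between (2^k) (two_le_two_pow hk) (inorder tx) hpwL
    (by rwa [inorder_length]) ((inorder P).toFinset)
    (fun b hb => hPinf.mem (List.mem_toFinset.1 hb))
    ?_ ?_
  · rwa [inorder_length] at hcount
  · -- convexity
    intro u hu w hw v hv huv hvw
    rw [List.mem_toFinset] at hu hw ⊢
    have hpw2 : (l1 ++ (inorder P ++ l2)).Pairwise (· < ·) := by
      rw [← List.append_assoc, ← heq]; exact hpwL
    have hv2 : v ∈ l1 ++ (inorder P ++ l2) := by
      rw [← List.append_assoc, ← heq]; exact hv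
    rcases List.mem_append.1 hv2 with hv1 | hv23
    · have : v < u := (List.pairwise_append.1 hpw2).2.2 v hv1 u (List.mem_append_left _ hu)
      exact absurd huv (not_le.2 this)
    · rcases List.mem_append.1 hv23 with hvP | hvl2
      · exact hvP
      · have hpw3 : (inorder P ++ l2).Pairwise (· < ·) := (List.pairwise_append.1 hpw2).2.1
        have : w < v := (List.pairwise_append.1 hpw3).2.2 w hw v hvl2
        exact absurd hvw (not_le.2 this)
  · -- rank elements avoid P
    intro j hj hmem
    have heR : (inorder tx).getD ((j+1) * (inorder tx).length / 2^k) 0 ∈ rankElems tx k := by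
      rw [rankElems]
      exact List.mem_map.2 ⟨j, List.mem_range.2 hj, by rw [inorder_length]⟩
    have heAA : (inorder tx).getD ((j+1) * (inorder tx).length / 2^k) 0 ∈ AA := by
      rw [← List.mem_toFinset, hAAfin]
      exact Finset.mem_union_right _ (List.mem_toFinset.2 heR)
    rw [List.mem_toFinset] at hmem
    rcases hsid _ heAA with h1 | h2
    · have hnod2 : (l1 ++ (inorder P ++ l2)).Nodup := by
        rw [← List.append_assoc, ← heq]; exact hnodL
      exact (List.nodup_append.1 hnod2).2.2 _ h1 _ (List.mem_append_left _ hmem) rfl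
    · have hnod3 : ((l1 ++ inorder P) ++ l2).Nodup := by rw [← heq]; exact hnodL
      exact (List.nodup_append.1 hnod3).2.2 _ (List.mem_append_right _ hmem) _ h2 rfl

end BT
namespace BT

lemma log2_lt_of_lt {x d : ℕ} (hd : 1 ≤ d) (h : x < 2 ^ d) : Nat.log 2 x < d := by
  cases x with
  | zero => simpa [Nat.log_zero_right] using (show 0 < d from hd)
  | succ x => exact Nat.log_lt_of_lt_pow (by omega) h

lemma slots_leaf_of_height {t : BT} (ht : isBST t) {d : ℕ} (hh : height t < d) :
    ∀ s ∈ slots d t, s = leaf := by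
  intro s hs
  cases s with
  | leaf => rfl
  | node l v r =>
    exfalso
    have hv : v ∈ nodes (node l v r) := by rw [nodes_node]; exact Finset.mem_insert_self _ _
    obtain ⟨hvt, hlen⟩ := slots_sig ht hs hv
    have : (sig t v).length ≤ height t := Finset.le_sup (f := fun x => (sig t x).length) hvt
    omega

lemma balanceResult_props {k : ℕ} (hk : 1 ≤ k) {tx s' : BT} (htx : isBST tx)
    (h : IsBalanceResult k tx s') :
    isBST s' ∧ nodes s' = nodes tx ∧ msz (k+1) s' ≤ size tx / 2 ^ k := by
  simp only [IsBalanceResult] at h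
  by_cases hsz : size tx < 2 ^ k
  · rw [if_pos hsz] at h
    obtain ⟨hbst, hnodes, hheight⟩ := h
    refine ⟨hbst, hnodes, ?_⟩
    have hsize' : size s' < 2 ^ k := by
      rw [size_eq_card hbst, hnodes]
      exact lt_of_le_of_lt (card_nodes_le_size tx) hsz
    have hh : height s' < k + 1 := by
      rw [hheight]
      apply log2_lt_of_lt (by omega)
      calc size s' < 2 ^ k := hsize'
      _ ≤ 2 ^ (k+1) := Nat.pow_le_pow_right (by omega) (by omega)
    have hleaf := slots_leaf_of_height hbst hh
    apply msz_le
    intro s hs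
    rw [hleaf s hs]
    exact Nat.zero_le _
  · rw [if_neg hsz] at h
    obtain ⟨t0, ht0, rfl⟩ := h
    have hn : 2 ^ k ≤ size tx := not_lt.1 hsz
    obtain ⟨hio, hPs⟩ := balance_glue k hk tx t0 htx hn ht0
    have hbst : isBST (glue t0 (balParts tx k)).1 :=
      isBST_of_pairwise (by rw [hio]; exact inorder_pairwise htx)
    have hnodes : nodes (glue t0 (balParts tx k)).1 = nodes tx := by
      rw [← inorder_toFinset, ← inorder_toFinset, hio]
    refine ⟨hbst, hnodes, ?_⟩
    have hcardt0 : size t0 < 2 ^ (k+1) := by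
      rw [size_eq_card ht0.1, ht0.2.1]
      have h1 := card_shallowNodes_le htx k
      have h2 : (rankElems tx k).toFinset.card ≤ 2 ^ k - 1 := by
        calc (rankElems tx k).toFinset.card ≤ (rankElems tx k).length :=
              List.toFinset_card_le _
        _ = 2 ^ k - 1 := by rw [rankElems, List.length_map, List.length_range]
      have h3 := Finset.card_union_le (shallowNodes tx k) (rankElems tx k).toFinset
      have h4 : 2 ^ (k+1) = 2 * 2 ^ k := by rw [pow_succ]; ring
      have h5 : 1 ≤ 2 ^ k := Nat.one_le_two_pow
      omega
    have hh0 : height t0 < k + 1 := by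
      rw [ht0.2.2]
      exact log2_lt_of_lt (by omega) hcardt0
    have hleaf0 := slots_leaf_of_height ht0.1 hh0
    apply msz_le
    intro s hs
    refine (slots_glue_le (k+1) t0 (balParts tx k) hleaf0 s hs).trans ?_
    apply foldr_max_le
    intro x hx
    rcases List.mem_map.1 hx with ⟨P, hP, rfl⟩
    exact (hPs P hP).2

lemma bulkBalance_props {k : ℕ} (hk : 1 ≤ k) :
    ∀ (θ : ℕ) (t t' : BT), isBST t → BulkBalanceRel k θ t t' →
    isBST t' ∧ nodes t' = nodes t ∧ msz (θ + (k+1)) t' ≤ msz θ t / 2 ^ k := by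
  intro θ
  induction θ with
  | zero =>
    intro t t' ht h
    rcases h with ⟨rfl, rfl⟩ | h
    · exact ⟨trivial, rfl, by rw [msz_leaf]; exact Nat.zero_le _⟩
    · obtain ⟨h1, h2, h3⟩ := balanceResult_props hk ht h
      exact ⟨h1, h2, by simpa [msz_zero, Nat.zero_add] using h3⟩
  | succ θ ih =>
    intro t t' ht h
    cases t with
    | leaf =>
      simp only [BulkBalanceRel] at h
      subst h
      exact ⟨trivial, rfl, by rw [msz_leaf]; exact Nat.zero_le _⟩
    | node l v r =>
      simp only [BulkBalanceRel] at h
      obtain ⟨l', r', hl, hr, rfl⟩ := h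
      obtain ⟨hbl, hnl, hml⟩ := ih l l' ht.2.2.1 hl
      obtain ⟨hbr, hnr, hmr⟩ := ih r r' ht.2.2.2 hr
      refine ⟨⟨?_, ?_, hbl, hbr⟩, ?_, ?_⟩
      · intro x hx; exact ht.1 x (hnl ▸ hx)
      · intro x hx; exact ht.2.1 x (hnr ▸ hx)
      · rw [nodes_node, nodes_node, hnl, hnr]
      · have e : θ + 1 + (k+1) = (θ + (k+1)) + 1 := by omega
        rw [e, msz_succ_node, msz_succ_node]
        apply max_le
        · exact hml.trans (Nat.div_le_div_right (le_max_left _ _))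
        · exact hmr.trans (Nat.div_le_div_right (le_max_right _ _))

end BT
namespace BT

lemma step_bound {k q : ℕ} (hk : 5 ≤ k) {T : ℕ → BT} (hseq : OnePhaseSeq k q T) :
    ∀ y < q, msz ((y+1) * (k+1)) (T (y+1)) ≤ 2 * (msz (y * (k+1)) (T y) / 2 ^ k) + 1 := by
  intro y hy
  obtain ⟨hbst, hne, hchunk, hstep⟩ := hseq
  obtain ⟨hheight, t₁, t₂, hbal, hins, hdel⟩ := hstep y hy
  have hbsty : isBST (T y) := hbst y (le_of_lt hy)
  obtain ⟨hbst1, hnodes1, hmsz1⟩ := bulkBalance_props (by omega) (y * (k+1)) (T y) t₁ hbsty hbal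
  obtain ⟨lI, hnodupI, htfI, rfl⟩ := hins
  obtain ⟨lD, hnodupD, htfD, hTy1⟩ := hdel
  set d := (y+1) * (k+1) with hd
  have hd2 : d = y * (k+1) + (k+1) := by rw [hd]; ring
  have hsep : ∀ u ∈ lI, ∀ w ∈ lI, u < w → ∃ x ∈ nodes t₁, u < x ∧ x < w := by
    intro u hu w hw huw
    have huI : u ∈ (T (y+1)).nodes \ (T y).nodes := by
      rw [← htfI]; exact List.mem_toFinset.2 hu
    have hwI : w ∈ (T (y+1)).nodes \ (T y).nodes := by
      rw [← htfI]; exact List.mem_toFinset.2 hw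
    have hS : ({u, w} : Finset ℝ) ⊆ (T (y+1)).nodes := by
      intro z hz
      rcases Finset.mem_insert.1 hz with rfl | hz
      · exact (Finset.mem_sdiff.1 huI).1
      · rw [Finset.mem_singleton.1 hz]
        exact (Finset.mem_sdiff.1 hwI).1
    have hcard : ({u, w} : Finset ℝ).card = 2 := Finset.card_pair (ne_of_lt huw)
    obtain ⟨x, hx, ⟨s1, hs1, hs1x⟩, ⟨s2, hs2, hxs2⟩⟩ := (hchunk y hy).1 {u, w} hS hcard
    have hxu : x ≠ u := fun h => (Finset.mem_sdiff.1 huI).2 (h ▸ hx)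
    have hxw : x ≠ w := fun h => (Finset.mem_sdiff.1 hwI).2 (h ▸ hx)
    have hmem2 : ∀ s ∈ ({u, w} : Finset ℝ), s = u ∨ s = w := by
      intro s hs
      rcases Finset.mem_insert.1 hs with h | h
      · exact Or.inl h
      · exact Or.inr (Finset.mem_singleton.1 h)
    have hux : u < x := by
      rcases hmem2 s1 hs1 with rfl | rfl
      · exact lt_of_le_of_ne hs1x (Ne.symm hxu)
      · rcases hmem2 s2 hs2 with rfl | rfl
        · exact absurd (hs1x.trans hxs2) (not_le.2 huw)
        · exact absurd (le_antisymm hxs2 hs1x) hxw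
    have hxw' : x < w := by
      rcases hmem2 s2 hs2 with rfl | rfl
      · exact absurd (le_antisymm hxs2 hux.le) hxu
      · exact lt_of_le_of_ne hxs2 hxw
    exact ⟨x, by rw [hnodes1]; exact hx, hux, hxw'⟩
  have h2 : msz d (lI.foldl ins t₁) ≤ 2 * msz d t₁ + 1 := msz_foldl_ins t₁ lI hbst1 d hsep
  have h3 : msz d (T (y+1)) ≤ msz d (lI.foldl ins t₁) := by
    rw [hTy1]; exact foldl_delete_msz lD _ d
  have h1 : msz d t₁ ≤ msz (y*(k+1)) (T y) / 2 ^ k := by rw [hd2]; exact hmsz1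
  omega

lemma msz_lower {k q : ℕ} (hk : 5 ≤ k) {T : ℕ → BT} (hseq : OnePhaseSeq k q T)
    (hq : 1 ≤ q) : 2 ^ ((k-2) * (q-1)) + 1 ≤ size (T 0) := by
  have hlow : ∀ y < q, 2 ≤ msz (y * (k+1)) (T y) := by
    intro y hy
    exact two_le_msz_of_height (hseq.1 y (le_of_lt hy)) ((hseq.2.2.2 y hy).1)
  have hstep := step_bound hk hseq
  have main : ∀ j, j ≤ q - 1 →
      2 ^ ((k-2) * j) + 1 ≤ msz ((q-1-j) * (k+1)) (T (q-1-j)) := by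
    intro j
    induction j with
    | zero =>
      intro _
      have := hlow (q-1) (by omega)
      simpa using this
    | succ j ih =>
      intro hj
      have hy : q-1-(j+1) < q := by omega
      have hy1 : q-1-(j+1)+1 = q-1-j := by omega
      have hstepy := hstep (q-1-(j+1)) hy
      rw [hy1] at hstepy
      have hih := ih (by omega)
      set m := msz ((q-1-(j+1)) * (k+1)) (T (q-1-(j+1))) with hm
      have hda : 2 ^ ((k-2) * j) ≤ 2 * (m / 2 ^ k) := by omega
      rcases Nat.eq_zero_or_pos j with rfl | hjpos
      · have h00 : (k-2) * 0 = 0 := by ring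
        rw [h00] at hda
        have hda' : 1 ≤ m / 2 ^ k := by
          simp only [pow_zero] at hda
          omega
        have h2k : 2 ^ k ≤ m := by
          rw [Nat.one_le_div_iff (Nat.pow_pos (by omega))] at hda'
          exact hda'
        have hsplit : 2 ^ k = 2 ^ (k-2) * 4 := by
          rw [show k = (k-2) + 2 by omega, pow_add]
          norm_num
        have h1p2 : 1 ≤ 2 ^ (k-2) := Nat.one_le_two_pow
        have hexp : (k-2) * (0+1) = k - 2 := by ring
        rw [hexp]
        omega
      · have he : 1 ≤ (k-2) * j := by
          have : 1 ≤ k - 2 := by omega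
          exact Nat.one_le_iff_ne_zero.2 (Nat.mul_ne_zero (by omega) (by omega))
        obtain ⟨e', hee⟩ : ∃ e', (k-2)*j = e' + 1 := ⟨(k-2)*j - 1, by omega⟩
        rw [hee] at hda
        have h2e : 2 ^ (e' + 1) = 2 * 2 ^ e' := by rw [pow_succ]; ring
        have hq1 : 2 ^ e' ≤ m / 2 ^ k := by omega
        have hmul : 2 ^ k * 2 ^ e' ≤ 2 ^ k * (m / 2 ^ k) := Nat.mul_le_mul_left _ hq1
        have hdm : 2 ^ k * (m / 2 ^ k) ≤ m := by
          rw [Nat.mul_comm]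
          exact Nat.div_mul_le_self _ _
        have hpowadd : 2 ^ k * 2 ^ e' = 2 ^ ((k-2)*(j+1) + 1) := by
          rw [← pow_add]
          congr 1
          have h' : (k-2)*(j+1) = (k-2)*j + (k-2) := by ring
          omega
        have hfin : 2 ^ ((k-2)*(j+1) + 1) = 2 * 2 ^ ((k-2)*(j+1)) := by
          rw [pow_succ]; ring
        have h1p : 1 ≤ 2 ^ ((k-2)*(j+1)) := Nat.one_le_two_pow
        omega
  have hfinal := main (q-1) (le_refl _)
  rw [Nat.sub_self, Nat.zero_mul, msz_zero] at hfinal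
  exact hfinal

end BT

theorem one_phase_length' (k q : ℕ) (hk : 5 ≤ k) (T : ℕ → BT)
    (hseq : OnePhaseSeq k q T) :
    (q : ℤ) ≤ ⌈Real.logb 2 ((T 0).size) / ((k : ℝ) - 2)⌉ := by
  have hsizepos : 1 ≤ (T 0).size := BT.size_pos_of_nonempty (hseq.2.1 0 (Nat.zero_le _))
  have hk2 : (0:ℝ) < (k:ℝ) - 2 := by
    have : (5:ℝ) ≤ (k:ℝ) := by exact_mod_cast hk
    linarith
  rcases Nat.eq_zero_or_pos q with rfl | hq
  · simp only [Nat.cast_zero]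
    apply Int.ceil_nonneg
    apply div_nonneg _ (le_of_lt hk2)
    apply Real.logb_nonneg (by norm_num)
    exact_mod_cast hsizepos
  · have hlower := BT.msz_lower hk hseq hq
    have hlt : (2:ℝ) ^ ((k-2) * (q-1)) < ((T 0).size : ℝ) := by
      have h : 2 ^ ((k-2) * (q-1)) < (T 0).size := by omega
      exact_mod_cast h
    have hlog : (((k-2) * (q-1) : ℕ) : ℝ) < Real.logb 2 ((T 0).size) := by
      have h2 : Real.logb 2 ((2:ℝ) ^ ((k-2) * (q-1) : ℕ)) = ((k-2) * (q-1) : ℕ) := by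
        rw [Real.logb_pow, Real.logb_self_eq_one (by norm_num)]
        ring
      calc (((k-2) * (q-1) : ℕ) : ℝ) = Real.logb 2 ((2:ℝ) ^ ((k-2) * (q-1) : ℕ)) := h2.symm
      _ < Real.logb 2 ((T 0).size) := by
          apply Real.logb_lt_logb (by norm_num) (by positivity) hlt
    have hEq : (((k-2) * (q-1) : ℕ) : ℝ) = ((k:ℝ) - 2) * ((q:ℝ) - 1) := by
      rw [Nat.cast_mul, Nat.cast_sub (by omega : 2 ≤ k), Nat.cast_sub (by omega : 1 ≤ q)]
      norm_num
    have hq1 : ((q:ℝ) - 1) < Real.logb 2 ((T 0).size) / ((k:ℝ) - 2) := by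
      rw [lt_div_iff₀ hk2]
      calc ((q:ℝ)-1) * ((k:ℝ)-2) = ((k:ℝ)-2) * ((q:ℝ)-1) := by ring
      _ = (((k-2) * (q-1) : ℕ) : ℝ) := hEq.symm
      _ < _ := hlog
    have hceil : ((q:ℤ) - 1 : ℤ) < ⌈Real.logb 2 ((T 0).size) / ((k:ℝ) - 2)⌉ := by
      rw [Int.lt_ceil]
      push_cast
      linarith [hq1]
    omega

/-- length of one-phase bulk tree sequences: a one-phase `k`-bulk
tree sequence `T_0, …, T_q` with `k ≥ 5` satisfies `q ≤ ⌈log₂ |T_0| / (k − 2)⌉`. -/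
theorem one_phase_length (k q : ℕ) (hk : 5 ≤ k) (T : ℕ → BT)
    (hseq : OnePhaseSeq k q T) :
    (q : ℤ) ≤ ⌈Real.logb 2 ((T 0).size) / ((k : ℝ) - 2)⌉ := by
  exact one_phase_length' k q hk T hseq
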